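/- arXiv:1206.2721 — 4 statements merged into one kernel-verified Lean document; each statement's English description precedes it below -/
import Mathlib

section
/- Let R be a commutative ring and let p, q be prime ideals of R with p ⊄ q. Let M be an R-module that is p-torsion (every element of M is annihilated by some power of p, equivalently by a finite product of elements of p) and let N be an R-module that is q-local (every element s ∉ q acts invertibly on N). Then Hom_R(M, N) = 0. -/
/-- If `p ⊄ q` are primes of a commutative ring `R`, `M` is `p`-torsion and `N` is `q`-local,
then every `R`-linear map `M → N` is zero. -/
theorem hom_torsion_to_local_eq_zero
    {R : Type*} [CommRing R] (p q : Ideal R) [p.IsPrime] [q.IsPrime] (hpq : ¬ p ≤ q)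
    {M N : Type*} [AddCommGroup M] [Module R M] [AddCommGroup N] [Module R N]
    (hM : ∀ m : M, ∃ n : ℕ, ∀ r ∈ p ^ n, r • m = 0)
    (hN : ∀ s : R, s ∉ q → Function.Bijective (fun x : N => s • x)) :
    ∀ f : M →ₗ[R] N, f = 0 := by
  obtain ⟨s, hsp, hsq⟩ := SetLike.not_le_iff_exists.mp hpq
  intro f
  ext m
  obtain ⟨n, hn⟩ := hM m
  have hsnq : s ^ n ∉ q := fun h => hsq (‹q.IsPrime›.mem_of_pow_mem n h)
  have hinj := (hN (s ^ n) hsnq).injective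
  apply hinj
  simp only [← f.map_smul, hn (s ^ n) (Ideal.pow_mem_pow hsp n), smul_zero,
    LinearMap.zero_apply, map_zero]
end

section
/- Let R be a commutative noetherian ring, V ⊆ Spec R a specialization closed subset, and E an injective R-module. Then the submodule Γ_V(E) = {e ∈ E | Supp(R·e) ⊆ V} of elements supported on V is again an injective R-module. -/
section MyAdjoin

open Module.Baer

variable {R : Type*} [Ring R] {Q : Type*} [AddCommGroup Q] [Module R Q]
variable {M N : Type*} [AddCommGroup M] [AddCommGroup N] [Module R M] [Module R N]
variable (i : M →ₗ[R] N) (f : M →ₗ[R] Q) [Fact (Function.Injective i)] {y : N}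
variable (φ : R →ₗ[R] Q)
private theorem myExtend_eq
    (hφ : ∀ (r : R) (hr : r ∈ ExtensionOfMaxAdjoin.ideal i f y),
      φ r = ExtensionOfMaxAdjoin.idealTo i f y ⟨r, hr⟩)
    (r : R) (hr : r • y ∈ (extensionOfMax i f).domain) :
    φ r = (extensionOfMax i f).toLinearPMap ⟨r • y, hr⟩ := by
  have hr' : r ∈ ExtensionOfMaxAdjoin.ideal i f y := hr
  rw [hφ r hr']
  rfl

/-- The extension to `domain ⊔ span {y}` as a bare function. -/
private noncomputable def myExtensionToFun : supExtensionOfMaxSingleton i f y → Q := fun x =>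
  (extensionOfMax i f).toLinearPMap (ExtensionOfMaxAdjoin.fst i x) +
    φ (ExtensionOfMaxAdjoin.snd i x)

private theorem myExtensionToFun_wd
    (hφ : ∀ (r : R) (hr : r ∈ ExtensionOfMaxAdjoin.ideal i f y),
      φ r = ExtensionOfMaxAdjoin.idealTo i f y ⟨r, hr⟩)
    (x : supExtensionOfMaxSingleton i f y) (a : (extensionOfMax i f).domain)
    (r : R) (eq1 : ↑x = ↑a + r • y) :
    myExtensionToFun i f φ x =
      (extensionOfMax i f).toLinearPMap a + φ r := by
  cases' a with a ha
  have eq2 :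
    (ExtensionOfMaxAdjoin.fst i x - a : N) = (r - ExtensionOfMaxAdjoin.snd i x) • y := by
    change x = a + r • y at eq1
    rwa [ExtensionOfMaxAdjoin.eqn, ← sub_eq_zero, ← sub_sub_sub_eq, sub_eq_zero, ← sub_smul]
      at eq1
  have eq3 :=
    myExtend_eq i f φ hφ (r - ExtensionOfMaxAdjoin.snd i x)
      (by rw [← eq2]; exact Submodule.sub_mem _ (ExtensionOfMaxAdjoin.fst i x).2 ha)
  simp only [map_sub, sub_smul, sub_eq_iff_eq_add] at eq3
  unfold myExtensionToFun
  rw [eq3, ← add_assoc, ← (extensionOfMax i f).toLinearPMap.map_add, AddMemClass.mk_add_mk]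
  congr
  ext
  dsimp
  rw [Subtype.coe_mk, add_sub, ← eq1]
  exact eq_sub_of_add_eq (ExtensionOfMaxAdjoin.eqn i x).symm

/-- The adjoined extension, an `ExtensionOf i f`. -/
private noncomputable def myExtensionOfMaxAdjoin
    (hφ : ∀ (r : R) (hr : r ∈ ExtensionOfMaxAdjoin.ideal i f y),
      φ r = ExtensionOfMaxAdjoin.idealTo i f y ⟨r, hr⟩) : ExtensionOf i f where
  domain := supExtensionOfMaxSingleton i f y
  le := le_trans (extensionOfMax i f).le le_sup_left
  toFun :=
    { toFun := myExtensionToFun i f φ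
      map_add' := fun a b => by
        have eq1 :
          ↑a + ↑b =
            ↑(ExtensionOfMaxAdjoin.fst i a + ExtensionOfMaxAdjoin.fst i b) +
              (ExtensionOfMaxAdjoin.snd i a + ExtensionOfMaxAdjoin.snd i b) • y := by
          rw [ExtensionOfMaxAdjoin.eqn, ExtensionOfMaxAdjoin.eqn, add_smul, Submodule.coe_add]
          ac_rfl
        rw [myExtensionToFun_wd (y := y) i f φ hφ (a + b) _ _ eq1,
          LinearPMap.map_add, map_add]
        unfold myExtensionToFun
        abel
      map_smul' := fun r a => by
        dsimp
        have eq1 :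
          r • (a : N) =
            ↑(r • ExtensionOfMaxAdjoin.fst i a) + (r • ExtensionOfMaxAdjoin.snd i a) • y := by
          rw [ExtensionOfMaxAdjoin.eqn, smul_add, smul_eq_mul, mul_smul]
          rfl
        rw [myExtensionToFun_wd i f φ hφ (r • a :) _ _ eq1, LinearMap.map_smul,
          LinearPMap.map_smul, ← smul_add]
        congr }
  is_extension m := by
    dsimp
    rw [(extensionOfMax i f).is_extension,
      myExtensionToFun_wd i f φ hφ _ ⟨i m, _⟩ 0 _, map_zero, add_zero]
    simp

private theorem myExtensionOfMax_le
    (hφ : ∀ (r : R) (hr : r ∈ ExtensionOfMaxAdjoin.ideal i f y),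
      φ r = ExtensionOfMaxAdjoin.idealTo i f y ⟨r, hr⟩) :
    extensionOfMax i f ≤ myExtensionOfMaxAdjoin i f φ hφ :=
  ⟨le_sup_left, fun x x' EQ => by
    symm
    change myExtensionToFun i f φ _ = _
    rw [myExtensionToFun_wd i f φ hφ x' x 0 (by simp [EQ]), map_zero, add_zero]⟩

end MyAdjoin
open Module.Baer in
private theorem injective_of_corr {R : Type*} [Ring R]
    {E : Type*} [AddCommGroup E] [Module R E] (hE : Module.Injective R E)
    (N : Submodule R E)
    (corr : ∀ (I : Ideal R) (e₀ : E), (∀ r ∈ I, r • e₀ ∈ N) →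
      ∃ e₁ ∈ N, ∀ r ∈ I, r • e₁ = r • e₀) :
    Module.Injective R ↥N := by
  constructor
  intro X Y _ _ _ _ ι hι g
  haveI : Fact (Function.Injective ι) := ⟨hι⟩
  have htop : (extensionOfMax ι g).domain = ⊤ := by
    refine Submodule.eq_top_iff'.mpr fun y => ?_
    set L := extensionOfMax ι g with hL
    -- get a preliminary extension value e₀ ∈ E using injectivity of E
    obtain ⟨h₀, hh₀⟩ := hE.out
      (Submodule.inclusion (le_sup_left : L.domain ≤ L.domain ⊔ Submodule.span R {y}))
      (Submodule.inclusion_injective _)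
      (N.subtype ∘ₗ L.toLinearPMap.toFun)
    set e₀ : E := h₀ ⟨y, Submodule.mem_sup_right (Submodule.mem_span_singleton_self y)⟩ with he₀
    have key : ∀ (r : R) (hr : r ∈ ExtensionOfMaxAdjoin.ideal ι g y),
        r • e₀ = (ExtensionOfMaxAdjoin.idealTo ι g y ⟨r, hr⟩ : E) := by
      intro r hr
      have hry : r • y ∈ L.domain := hr
      have h1 : (r • (⟨y, Submodule.mem_sup_right (Submodule.mem_span_singleton_self y)⟩ :
            ↥(L.domain ⊔ Submodule.span R {y})))
          = Submodule.inclusion (le_sup_left : L.domain ≤ L.domain ⊔ Submodule.span R {y})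
            ⟨r • y, hry⟩ := Subtype.ext rfl
      rw [he₀, ← map_smul, h1, hh₀]
      rfl
    obtain ⟨e₁, he₁, hspec⟩ := corr (ExtensionOfMaxAdjoin.ideal ι g y) e₀
      (fun r hr => by rw [key r hr]; exact (ExtensionOfMaxAdjoin.idealTo ι g y ⟨r, hr⟩).2)
    set φ : R →ₗ[R] ↥N := LinearMap.toSpanSingleton R ↥N ⟨e₁, he₁⟩ with hφdef
    have hφ : ∀ (r : R) (hr : r ∈ ExtensionOfMaxAdjoin.ideal ι g y),
        φ r = ExtensionOfMaxAdjoin.idealTo ι g y ⟨r, hr⟩ := by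
      intro r hr
      apply Subtype.ext
      have : (φ r : E) = r • e₁ := rfl
      rw [this, hspec r hr, key r hr]
    show y ∈ (extensionOfMax ι g).domain
    rw [← extensionOfMax_is_max ι g _ (myExtensionOfMax_le ι g φ hφ)]
    exact Submodule.mem_sup_right (Submodule.mem_span_singleton_self y)
  refine ⟨{ toFun := fun y => (extensionOfMax ι g).toLinearPMap
              ⟨y, Submodule.eq_top_iff'.mp htop y⟩
            map_add' := fun x y => by rw [← LinearPMap.map_add]; congr
            map_smul' := fun r x => by rw [← LinearPMap.map_smul]; dsimp },
    fun x => ?_⟩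
  exact ((extensionOfMax ι g).is_extension x).symm
private lemma ann_span_coe {R E : Type*} [CommRing R] [AddCommGroup E] [Module R E]
    (p : Submodule R E) (y : E) (hy : y ∈ p) :
    (Submodule.span R {(⟨y, hy⟩ : p)}).annihilator = (Submodule.span R {y}).annihilator := by
  ext r
  simp only [Submodule.mem_annihilator_span_singleton]
  constructor
  · intro h
    have := congrArg (Submodule.subtype p) h
    simpa using this
  · intro h
    exact Subtype.ext (by simpa using h)

private lemma torsion_corr {R : Type*} [CommRing R] [IsNoetherianRing R]
    {E : Type*} [AddCommGroup E] [Module R E]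
    (hE : Module.Injective R E)
    (V : Set (PrimeSpectrum R)) (N : Submodule R E)
    (hN : ∀ e : E, e ∈ N ↔ Module.support R ↥(Submodule.span R {e}) ⊆ V)
    (I : Ideal R) (e₀ : E) (hIe : ∀ r ∈ I, r • e₀ ∈ N) :
    ∃ e₁ ∈ N, ∀ r ∈ I, r • e₁ = r • e₀ := by
  classical
  set A : Ideal R := (Submodule.span R {e₀}).annihilator with hA
  set I' : Ideal R := I ⊔ A with hI'def
  have hI'e : ∀ r ∈ I', r • e₀ ∈ N := by
    intro r hr
    obtain ⟨i, hi, a, ha, rfl⟩ := Submodule.mem_sup.mp hr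
    have ha0 : a • e₀ = 0 := (Submodule.mem_annihilator_span_singleton _ _).mp ha
    rw [add_smul, ha0, add_zero]
    exact hIe i hi
  set τ : R →ₗ[R] E := LinearMap.toSpanSingleton R E e₀ with hτ
  set T : Submodule R E := Submodule.map τ (I' : Submodule R R) with hT
  set a : Ideal R := T.annihilator with ha
  -- Artin-Rees
  obtain ⟨k, hk⟩ := Ideal.exists_pow_inf_eq_pow_smul a (I' : Submodule R R)
  have hk1 : a ^ (k+1) • (⊤ : Submodule R R) ⊓ (I' : Submodule R R)
      = a • (a ^ k • ⊤ ⊓ (I' : Submodule R R)) := by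
    have := hk (k+1) (Nat.le_succ k)
    simpa using this
  set c : Ideal R := a ^ (k+1) with hc
  have key : ∀ s ∈ c, s ∈ I' → s • e₀ = 0 := by
    intro s hs hsI
    have h1 : s ∈ a ^ (k+1) • (⊤ : Submodule R R) ⊓ (I' : Submodule R R) := by
      refine ⟨?_, hsI⟩
      have := Submodule.smul_mem_smul hs (Submodule.mem_top (x := (1 : R)))
      simpa using this
    rw [hk1] at h1
    have h2 : s ∈ a • (I' : Submodule R R) :=
      (smul_mono_right a (inf_le_right : a ^ k • ⊤ ⊓ (I' : Submodule R R) ≤ I')) h1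
    refine Submodule.smul_induction_on h2 ?_ ?_
    · intro r hr n hn
      have hnT : n • e₀ ∈ T := ⟨n, hn, rfl⟩
      have : r • (n • e₀) = 0 := Submodule.mem_annihilator.mp hr _ hnT
      rwa [smul_eq_mul, mul_smul]
    · intro x y hx hy
      rw [add_smul, hx, hy, add_zero]
  -- the small model
  set M₀ : Submodule R E := Submodule.span R {e₀} with hM₀
  have hTM₀ : T ≤ M₀ := by
    rintro x ⟨r, hr, rfl⟩
    exact Submodule.smul_mem _ r (Submodule.mem_span_singleton_self e₀)
  set P : Submodule R ↥M₀ := (c • M₀).comap M₀.subtype with hP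
  set κ : ↥T →ₗ[R] (↥M₀ ⧸ P) := P.mkQ ∘ₗ Submodule.inclusion hTM₀ with hκ
  have hcM₀ : ∀ x ∈ c • M₀, ∃ s ∈ c, s • e₀ = x := by
    intro x hx
    refine Submodule.smul_induction_on hx ?_ ?_
    · intro r hr m hm
      obtain ⟨u, rfl⟩ := Submodule.mem_span_singleton.mp hm
      exact ⟨r * u, Ideal.mul_mem_right u _ hr, (mul_smul r u e₀).symm ▸ rfl⟩
    · rintro x y ⟨s1, hs1, rfl⟩ ⟨s2, hs2, rfl⟩
      exact ⟨s1 + s2, Ideal.add_mem _ hs1 hs2, (add_smul s1 s2 e₀)⟩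
  have hκinj : Function.Injective κ := by
    rw [← LinearMap.ker_eq_bot, LinearMap.ker_eq_bot']
    intro t ht
    have h1 : (Submodule.inclusion hTM₀ t : ↥M₀) ∈ P := by
      have h0 : P.mkQ (Submodule.inclusion hTM₀ t) = 0 := ht
      rwa [Submodule.mkQ_apply, Submodule.Quotient.mk_eq_zero] at h0
    have h2 : (t : E) ∈ c • M₀ := h1
    obtain ⟨s, hs, hse⟩ := hcM₀ _ h2
    obtain ⟨r, hr, hre⟩ := t.2
    have hrE : τ r = (t : E) := hre
    have hsI' : s ∈ I' := by
      have hsub : s - r ∈ A := by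
        rw [hA, Submodule.mem_annihilator_span_singleton, sub_smul, hse]
        rw [hτ] at hrE
        simp only [LinearMap.toSpanSingleton_apply] at hrE
        rw [hrE, sub_self]
      have : s = r + (s - r) := by ring
      rw [this]
      exact Ideal.add_mem _ hr (le_sup_right (α := Ideal R) hsub)
    have : (t : E) = 0 := by rw [← hse]; exact key s hs hsI'
    exact Subtype.ext this
  obtain ⟨θ, hθ⟩ := hE.out κ hκinj T.subtype
  set e₁ : E := θ (P.mkQ ⟨e₀, Submodule.mem_span_singleton_self e₀⟩) with he₁def
  have hspec : ∀ r ∈ I', r • e₁ = r • e₀ := by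
    intro r hr
    have hmem : r • e₀ ∈ T := ⟨r, hr, rfl⟩
    have h1 : κ ⟨r • e₀, hmem⟩
        = P.mkQ (r • (⟨e₀, Submodule.mem_span_singleton_self e₀⟩ : ↥M₀)) := by
      exact congrArg P.mkQ (Subtype.ext rfl)
    calc r • e₁ = θ (P.mkQ (r • (⟨e₀, Submodule.mem_span_singleton_self e₀⟩ : ↥M₀))) := by
            rw [he₁def, ← map_smul, ← map_smul]
      _ = θ (κ ⟨r • e₀, hmem⟩) := by rw [h1]
      _ = r • e₀ := by rw [hθ]; rfl
  have hce₁ : ∀ s ∈ c, s • e₁ = 0 := by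
    intro s hs
    have h1 : (s • (⟨e₀, Submodule.mem_span_singleton_self e₀⟩ : ↥M₀)) ∈ P := by
      show (s • e₀ : E) ∈ c • M₀
      exact Submodule.smul_mem_smul hs (Submodule.mem_span_singleton_self e₀)
    have h2 : P.mkQ (s • (⟨e₀, Submodule.mem_span_singleton_self e₀⟩ : ↥M₀)) = 0 :=
      (Submodule.Quotient.mk_eq_zero P).mpr h1
    rw [he₁def, ← map_smul, ← map_smul, h2, map_zero]
  have he₁N : e₁ ∈ N := by
    rw [hN]
    intro p hp
    obtain ⟨m, hm⟩ := Module.mem_support_iff_exists_annihilator.mp hp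
    have hcann : c ≤ (Submodule.span R {m}).annihilator := by
      intro s hs
      rw [Submodule.mem_annihilator_span_singleton]
      obtain ⟨u, hu⟩ := Submodule.mem_span_singleton.mp m.2
      apply Subtype.ext
      show s • (m : E) = 0
      rw [← hu]
      calc s • u • e₁ = u • (s • e₁) := smul_comm s u e₁
        _ = 0 := by rw [hce₁ s hs, smul_zero]
    have hcp : c ≤ p.asIdeal := le_trans hcann hm
    have hap : a ≤ p.asIdeal := fun r hr =>
      p.isPrime.mem_of_pow_mem (k+1) (hcp (Ideal.pow_mem_pow hr (k+1)))
    obtain ⟨s, hs⟩ := IsNoetherian.noetherian (I' : Submodule R R)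
    have hprod : (∏ x ∈ s, (Submodule.span R {τ x}).annihilator) ≤ a := by
      intro r hr
      rw [ha, Submodule.mem_annihilator]
      intro n hn
      rw [hT, ← hs, Submodule.map_span] at hn
      refine Submodule.span_induction ?_ ?_ ?_ ?_ hn
      · rintro x ⟨x', hx', rfl⟩
        have h1 : (∏ x ∈ s, (Submodule.span R {τ x}).annihilator)
            ≤ (Submodule.span R {τ x'}).annihilator :=
          le_trans Ideal.prod_le_inf (Finset.inf_le hx')
        exact (Submodule.mem_annihilator_span_singleton _ _).mp (h1 hr)
      · exact smul_zero r
      · intro x y _ _ hx hy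
        rw [smul_add, hx, hy, add_zero]
      · intro u x _ hx
        rw [smul_comm, hx, smul_zero]
    obtain ⟨x, hxs, hxann⟩ := (Ideal.IsPrime.prod_le p.isPrime).mp (le_trans hprod hap)
    have hxI' : x ∈ I' := by rw [← hs]; exact Submodule.subset_span hxs
    have hxN : τ x ∈ N := hI'e x hxI'
    have hpx : p ∈ Module.support R ↥(Submodule.span R {τ x}) :=
      Module.mem_support_iff_exists_annihilator.mpr
        ⟨⟨τ x, Submodule.mem_span_singleton_self _⟩, by
          rwa [ann_span_coe (Submodule.span R {τ x}) (τ x)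
            (Submodule.mem_span_singleton_self _)]⟩
    exact (hN (τ x)).mp hxN hpx
  exact ⟨e₁, he₁N, fun r hr => hspec r (le_sup_left (α := Ideal R) hr)⟩

/-- Over a commutative noetherian ring, the `V`-torsion submodule of an injective module is
injective, for any specialization closed subset `V ⊆ Spec R`. -/
theorem torsionSubmodule_injective_of_injective
    {R : Type*} [CommRing R] [IsNoetherianRing R]
    (V : Set (PrimeSpectrum R))
    (hV : ∀ p ∈ V, ∀ q : PrimeSpectrum R, p.asIdeal ≤ q.asIdeal → q ∈ V)
    {E : Type*} [AddCommGroup E] [Module R E] (hE : Module.Injective R E)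
    (N : Submodule R E)
    (hN : ∀ e : E, e ∈ N ↔ Module.support R ↥(Submodule.span R {e}) ⊆ V) :
    Module.Injective R ↥N := by
  exact injective_of_corr hE N (fun I e₀ hIe => torsion_corr hE V N hN I e₀ hIe)
end

section
/- Let R be a commutative noetherian Gorenstein ring (R has finite injective dimension over itself) and let 0 → G' → G → G'' → 0 be a short exact sequence of R-modules in which G' and G are Gorenstein injective. Then G'' is Gorenstein injective. -/
open CategoryTheory

/-- An `R`-module `G` is Gorenstein injective if it is the zeroth syzygy of a totally acyclic
complex of injective `R`-modules. -/
def IsGorensteinInjective (R : Type) [CommRing R]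
    (G : Type) [AddCommGroup G] [Module R G] : Prop :=
  ∃ (E : ℤ → ModuleCat.{0} R) (d : ∀ i : ℤ, E i ⟶ E (i + 1)),
    (∀ i, Module.Injective R (E i)) ∧
    (∀ i, LinearMap.range (d i).hom = LinearMap.ker (d (i + 1)).hom) ∧
    (∀ (I : ModuleCat.{0} R), Module.Injective R I →
      ∀ (i : ℤ) (f : I ⟶ E (i + 1)), f ≫ d (i + 1) = 0 →
        ∃ g : I ⟶ E i, g ≫ d i = f) ∧
    Nonempty (G ≃ₗ[R] LinearMap.ker (d 0).hom)

/-- A commutative ring is Gorenstein if it has finite injective dimension as a module over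
itself, i.e. `R` admits a finite injective resolution `0 → R → E^0 → ⋯ → E^n → 0`. -/
def IsGorensteinRing (R : Type) [CommRing R] : Prop :=
  ∃ (n : ℕ) (E : ℕ → ModuleCat.{0} R) (d : ∀ i : ℕ, E i ⟶ E (i + 1))
    (ε : ModuleCat.of R R ⟶ E 0),
    (∀ i, Module.Injective R (E i)) ∧
    Function.Injective ε ∧
    LinearMap.range ε.hom = LinearMap.ker (d 0).hom ∧
    (∀ i, LinearMap.range (d i).hom = LinearMap.ker (d (i + 1)).hom) ∧
    (∀ i, n < i → Subsingleton (E i))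

open CategoryTheory LinearMap

section Helpers

variable {R : Type} [CommRing R]

/-- Factor a linear map through a surjection whose kernel it kills. -/
noncomputable def factorThru {X Y Z : Type} [AddCommGroup X] [AddCommGroup Y] [AddCommGroup Z]
    [Module R X] [Module R Y] [Module R Z]
    (p : X →ₗ[R] Y) (hp : Function.Surjective p) (f : X →ₗ[R] Z)
    (h : ker p ≤ ker f) : Y →ₗ[R] Z :=
  (Submodule.liftQ (ker p) f h) ∘ₗ (p.quotKerEquivOfSurjective hp).symm.toLinearMap

lemma factorThru_apply {X Y Z : Type} [AddCommGroup X] [AddCommGroup Y] [AddCommGroup Z]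
    [Module R X] [Module R Y] [Module R Z]
    (p : X →ₗ[R] Y) (hp : Function.Surjective p) (f : X →ₗ[R] Z)
    (h : ker p ≤ ker f) (x : X) : factorThru p hp f h (p x) = f x := by
  have h1 : (p.quotKerEquivOfSurjective hp).symm (p x) = Submodule.Quotient.mk x := by
    rw [LinearEquiv.symm_apply_eq]
    rfl
  simp [factorThru, h1]

lemma injective_prod {A B : Type} [AddCommGroup A] [AddCommGroup B] [Module R A] [Module R B]
    (hA : Module.Injective R A) (hB : Module.Injective R B) : Module.Injective R (A × B) := by
  constructor
  intro X Y _ _ _ _ f hf g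
  obtain ⟨hA', hA'c⟩ := hA.out f hf ((LinearMap.fst R A B) ∘ₗ g)
  obtain ⟨hB', hB'c⟩ := hB.out f hf ((LinearMap.snd R A B) ∘ₗ g)
  exact ⟨LinearMap.prod hA' hB', fun x => by
    simp only [LinearMap.prod_apply, Function.prod, hA'c x, hB'c x]; rfl⟩

lemma injective_punit : Module.Injective R PUnit.{1} := by
  constructor
  intro X Y _ _ _ _ f hf g
  exact ⟨0, fun x => by apply Subsingleton.elim⟩

end Helpers

section LiftP

variable (R : Type) [CommRing R]

/-- `LiftP R M` says: for every surjection `p : X → Y` with kernel isomorphic to `M`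
(witnessed by `ι`), every map from an injective module `I` to `Y` lifts through `p`.
This is an elementary rendering of `Ext¹_R(I, M) = 0` for all injective `I`. -/
def LiftP (M : Type) [AddCommGroup M] [Module R M] : Prop :=
  ∀ (X Y : Type) [AddCommGroup X] [AddCommGroup Y],
  ∀ [Module R X] [Module R Y],
  ∀ (ι : M →ₗ[R] X) (p : X →ₗ[R] Y), Function.Injective ι → Function.Surjective p →
    range ι = ker p →
    ∀ (I : Type) [AddCommGroup I], ∀ [Module R I], Module.Injective R I →
    ∀ (t : I →ₗ[R] Y), ∃ s : I →ₗ[R] X, p ∘ₗ s = t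

variable {R}

lemma liftP_of_equiv {M N : Type} [AddCommGroup M] [Module R M] [AddCommGroup N] [Module R N]
    (e : M ≃ₗ[R] N) (hM : LiftP R M) : LiftP R N := by
  intro X Y _ _ _ _ ι p hι hp hιp I _ _ hI t
  refine hM X Y (ι ∘ₗ e.toLinearMap) p (by
      intro a b hab
      exact e.injective (hι hab)) hp ?_ I hI t
  rw [← hιp]
  ext x
  constructor
  · rintro ⟨a, rfl⟩; exact ⟨e a, rfl⟩
  · rintro ⟨a, rfl⟩; exact ⟨e.symm a, by simp⟩

lemma liftP_of_injective {M : Type} [AddCommGroup M] [Module R M]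
    (hM : Module.Injective R M) : LiftP R M := by
  intro X Y _ _ _ _ ι p hι hp hιp I _ _ hI t
  -- retraction r : X → M with r ∘ ι = id
  obtain ⟨r, hr⟩ := hM.out ι hι (LinearMap.id)
  -- τ : X → X, τ x = x - ι (r x), kills range ι = ker p
  set τ : X →ₗ[R] X := LinearMap.id - ι ∘ₗ r with hτ
  have hker : ker p ≤ ker (τ) := by
    intro x hx
    rw [← hιp] at hx
    obtain ⟨m, rfl⟩ := hx
    simp [hτ, hr m]
  -- σ : Y → X with σ ∘ p = τ
  set σ := factorThru p hp τ hker with hσ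
  have hpσ : ∀ y, p (σ y) = y := by
    intro y
    obtain ⟨x, rfl⟩ := hp y
    rw [hσ, factorThru_apply]
    have : p (ι (r x)) = 0 := by
      have : ι (r x) ∈ ker p := by rw [← hιp]; exact ⟨r x, rfl⟩
      exact this
    simp [hτ, this]
  exact ⟨σ ∘ₗ t, by ext i; simp [hpσ]⟩

/-- `LiftP` is closed under extensions. -/
lemma liftP_ext {A B C : Type} [AddCommGroup A] [Module R A] [AddCommGroup B] [Module R B]
    [AddCommGroup C] [Module R C]
    (u : A →ₗ[R] B) (v : B →ₗ[R] C) (hu : Function.Injective u) (hv : Function.Surjective v)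
    (huv : range u = ker v) (hA : LiftP R A) (hC : LiftP R C) : LiftP R B := by
  intro X Y _ _ _ _ ι p hι hp hιp I _ _ hI t
  -- X₁ := X / ι(u(A))
  set A' : Submodule R X := range (ι ∘ₗ u) with hA'
  set X₁ := X ⧸ A' with hX₁
  set q : X →ₗ[R] X₁ := A'.mkQ with hq
  have hqs : Function.Surjective q := Submodule.mkQ_surjective A'
  have hkerq : ker q = A' := Submodule.ker_mkQ A'
  -- p factors through q
  have hpk : ker q ≤ ker p := by
    rw [hkerq]
    rintro x ⟨a, rfl⟩
    have : ι (u a) ∈ ker p := by rw [← hιp]; exact ⟨u a, rfl⟩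
    exact this
  set p₁ := factorThru q hqs p hpk with hp₁
  have hp₁q : ∀ x, p₁ (q x) = p x := fun x => factorThru_apply q hqs p hpk x
  have hp₁s : Function.Surjective p₁ := by
    intro y; obtain ⟨x, rfl⟩ := hp y; exact ⟨q x, hp₁q x⟩
  -- mono w : C → X₁ with range w = ker p₁
  have hkv : ker v ≤ ker (q ∘ₗ ι) := by
    intro b hb
    rw [← huv] at hb
    obtain ⟨a, rfl⟩ := hb
    have : q (ι (u a)) = 0 := by
      rw [hq, Submodule.mkQ_apply, Submodule.Quotient.mk_eq_zero]
      exact ⟨a, rfl⟩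
    exact this
  set w := factorThru v hv (q ∘ₗ ι) hkv with hw
  have hwv : ∀ b, w (v b) = q (ι b) := fun b => factorThru_apply v hv _ hkv b
  have hwinj : Function.Injective w := by
    rw [← LinearMap.ker_eq_bot]
    apply Submodule.eq_bot_iff _ |>.2
    intro c hc
    obtain ⟨b, rfl⟩ := hv c
    rw [mem_ker, hwv] at hc
    rw [hq, Submodule.mkQ_apply, Submodule.Quotient.mk_eq_zero] at hc
    obtain ⟨a, ha⟩ := hc
    obtain rfl : u a = b := hι ha
    have : u a ∈ ker v := by rw [← huv]; exact ⟨a, rfl⟩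
    exact this
  have hwrange : range w = ker p₁ := by
    ext x₁
    constructor
    · rintro ⟨c, rfl⟩
      obtain ⟨b, rfl⟩ := hv c
      rw [mem_ker, hwv, hp₁q]
      have : ι b ∈ ker p := by rw [← hιp]; exact ⟨b, rfl⟩
      exact this
    · intro hx
      obtain ⟨x, rfl⟩ := hqs x₁
      rw [mem_ker, hp₁q] at hx
      have hx' : x ∈ ker p := hx
      rw [← hιp] at hx'
      obtain ⟨b, rfl⟩ := hx'
      exact ⟨v b, hwv b⟩
  -- lift t to X₁ using LiftP C
  obtain ⟨s₁, hs₁⟩ := hC X₁ Y w p₁ hwinj hp₁s hwrange I hI t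
  -- lift s₁ to X using LiftP A
  have hιu_inj : Function.Injective (ι ∘ₗ u) := fun a b hab => hu (hι hab)
  have : range (ι ∘ₗ u) = ker q := by rw [hkerq]
  obtain ⟨s, hs⟩ := hA X X₁ (ι ∘ₗ u) q hιu_inj hqs this I hI s₁
  refine ⟨s, ?_⟩
  ext i
  have : p (s i) = p₁ (q (s i)) := (hp₁q _).symm
  rw [LinearMap.comp_apply, this]
  have : q (s i) = s₁ i := by rw [← LinearMap.comp_apply, hs]
  rw [this, ← LinearMap.comp_apply, hs₁]

end LiftP
section Towers

open CategoryTheory LinearMap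

variable (R : Type) [CommRing R]

/-- A right tower for `M`: an injective coresolution of `M` with all cosyzygies
satisfying `LiftP` (i.e. a "totally acyclic" right half). -/
structure RTow (M : Type) [AddCommGroup M] [Module R M] where
  S : ℕ → ModuleCat.{0} R
  J : ℕ → ModuleCat.{0} R
  ι : ∀ k, S k →ₗ[R] J k
  π : ∀ k, J k →ₗ[R] S (k+1)
  injJ : ∀ k, Module.Injective R (J k)
  mono : ∀ k, Function.Injective (ι k)
  epi : ∀ k, Function.Surjective (π k)
  ex : ∀ k, range (ι k) = ker (π k)
  lif : ∀ k, LiftP R (S k)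
  e : M ≃ₗ[R] S 0

/-- A left tower for `M`: a proper left injective resolution of `M` with all
syzygies satisfying `LiftP`. -/
structure LTow (M : Type) [AddCommGroup M] [Module R M] where
  S : ℕ → ModuleCat.{0} R
  J : ℕ → ModuleCat.{0} R
  ι : ∀ k, S (k+1) →ₗ[R] J k
  π : ∀ k, J k →ₗ[R] S k
  injJ : ∀ k, Module.Injective R (J k)
  mono : ∀ k, Function.Injective (ι k)
  epi : ∀ k, Function.Surjective (π k)
  ex : ∀ k, range (ι k) = ker (π k)
  lif : ∀ k, LiftP R (S k)
  e : M ≃ₗ[R] S 0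

variable {R}

def RTow.shift {M : Type} [AddCommGroup M] [Module R M] (T : RTow R M) : RTow R (T.S 1) where
  S := fun n => T.S (n+1)
  J := fun n => T.J (n+1)
  ι := fun k => T.ι (k+1)
  π := fun k => T.π (k+1)
  injJ := fun k => T.injJ (k+1)
  mono := fun k => T.mono (k+1)
  epi := fun k => T.epi (k+1)
  ex := fun k => T.ex (k+1)
  lif := fun k => T.lif (k+1)
  e := LinearEquiv.refl R _

def LTow.shift {M : Type} [AddCommGroup M] [Module R M] (T : LTow R M) : LTow R (T.S 1) where
  S := fun n => T.S (n+1)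
  J := fun n => T.J (n+1)
  ι := fun k => T.ι (k+1)
  π := fun k => T.π (k+1)
  injJ := fun k => T.injJ (k+1)
  mono := fun k => T.mono (k+1)
  epi := fun k => T.epi (k+1)
  ex := fun k => T.ex (k+1)
  lif := fun k => T.lif (k+1)
  e := LinearEquiv.refl R _

/-- Gluing a left tower and a right tower into a totally acyclic complex. -/
theorem glue {M : Type} [AddCommGroup M] [Module R M] (L : LTow R M) (T : RTow R M) :
    IsGorensteinInjective R M := by
  refine ⟨fun i => match i with
    | .ofNat n => T.J n
    | .negSucc n => L.J n,
    fun i => match i with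
    | .ofNat n => ModuleCat.ofHom (T.ι (n+1) ∘ₗ T.π n : T.J n →ₗ[R] T.J (n+1))
    | .negSucc 0 => ModuleCat.ofHom (T.ι 0 ∘ₗ (T.e.toLinearMap ∘ₗ (L.e.symm.toLinearMap ∘ₗ L.π 0)) :
        L.J 0 →ₗ[R] T.J 0)
    | .negSucc (n+1) => ModuleCat.ofHom (L.ι n ∘ₗ L.π (n+1) : L.J (n+1) →ₗ[R] L.J n),
    ?_, ?_, ?_, ?_⟩
  · rintro (n | n)
    · exact T.injJ n
    · exact L.injJ n
  · rintro (n | (_ | n))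
    · -- i = ofNat n : range (ι(n+1)∘π n) = ker (ι(n+2)∘π(n+1))
      show range (T.ι (n+1) ∘ₗ T.π n) = ker ((T.ι (n+1+1) ∘ₗ T.π (n+1) : T.J (n+1) →ₗ[R] T.J (n+1+1)))
      rw [LinearMap.range_comp_of_range_eq_top _ (range_eq_top.2 (T.epi n)),
        LinearMap.ker_comp, LinearMap.ker_eq_bot.2 (T.mono (n+1+1)), Submodule.comap_bot,
        T.ex (n+1)]
    · -- i = negSucc 0
      show range (T.ι 0 ∘ₗ (T.e.toLinearMap ∘ₗ (L.e.symm.toLinearMap ∘ₗ L.π 0)))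
        = ker ((T.ι (0+1) ∘ₗ T.π 0 : T.J 0 →ₗ[R] T.J (0+1)))
      rw [LinearMap.ker_comp, LinearMap.ker_eq_bot.2 (T.mono (0+1)), Submodule.comap_bot,
        ← T.ex 0]
      have hsurj : Function.Surjective (T.e.toLinearMap ∘ₗ (L.e.symm.toLinearMap ∘ₗ L.π 0)) := by
        intro y
        obtain ⟨x, hx⟩ := L.epi 0 (L.e (T.e.symm y))
        exact ⟨x, by simp [hx]⟩
      rw [LinearMap.range_comp_of_range_eq_top _ (range_eq_top.2 hsurj)]
    · -- i = negSucc (n+1)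
      show range (L.ι n ∘ₗ L.π (n+1)) = ker _
      rw [LinearMap.range_comp_of_range_eq_top _ (range_eq_top.2 (L.epi (n+1)))]
      match n with
      | 0 =>
        show range (L.ι 0) = ker (T.ι 0 ∘ₗ (T.e.toLinearMap ∘ₗ (L.e.symm.toLinearMap ∘ₗ L.π 0)))
        rw [LinearMap.ker_comp, LinearMap.ker_eq_bot.2 (T.mono 0), Submodule.comap_bot,
          LinearMap.ker_comp, LinearMap.ker_eq_bot.2 T.e.injective, Submodule.comap_bot,
          LinearMap.ker_comp, LinearMap.ker_eq_bot.2 L.e.symm.injective, Submodule.comap_bot,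
          L.ex 0]
      | m+1 =>
        show range (L.ι (m+1)) = ker (L.ι m ∘ₗ L.π (m+1))
        rw [LinearMap.ker_comp, LinearMap.ker_eq_bot.2 (L.mono m), Submodule.comap_bot,
          L.ex (m+1)]
  · -- lifting property
    rintro I hI (n | (_ | n)) f hf
    · -- i = ofNat n, f : I ⟶ J (n+1), f ≫ (ι(n+2)∘π(n+1)) = 0
      have hπf : ∀ x, T.π (n+1) (f x) = 0 := by
        intro x
        apply T.mono (n+1+1)
        have := congrArg (fun (h : I ⟶ T.J (n+1+1)) => h x) hf
        rw [map_zero]; exact this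
      -- f factors through range (T.ι (n+1)) = ker (T.π (n+1))
      have hmem : ∀ x, f x ∈ range (T.ι (n+1)) := by
        intro x; rw [T.ex (n+1)]; exact hπf x
      set f₁ : (I : Type) →ₗ[R] T.S (n+1) :=
        (LinearEquiv.ofInjective (T.ι (n+1)) (T.mono (n+1))).symm.toLinearMap ∘ₗ
          (LinearMap.codRestrict (range (T.ι (n+1))) f.hom hmem) with hf₁
      have hf₁c : ∀ x, T.ι (n+1) (f₁ x) = f x := by
        intro x
        have : T.ι (n+1) (f₁ x) =
            ((LinearEquiv.ofInjective (T.ι (n+1)) (T.mono (n+1)))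
              ((LinearEquiv.ofInjective (T.ι (n+1)) (T.mono (n+1))).symm
                ⟨f x, hmem x⟩) : T.J (n+1)) := rfl
        rw [LinearEquiv.apply_symm_apply] at this
        exact this
      obtain ⟨s, hs⟩ := T.lif n (T.J n) (T.S (n+1)) (T.ι n) (T.π n) (T.mono n) (T.epi n)
        (T.ex n) I hI f₁
      refine ⟨ModuleCat.ofHom s, ?_⟩
      ext x
      show T.ι (n+1) (T.π n (s x)) = f x
      have : T.π n (s x) = f₁ x := by rw [← LinearMap.comp_apply, hs]
      rw [this, hf₁c]
    · -- i = negSucc 0, f : I ⟶ T.J 0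
      have hπf : ∀ x, T.π 0 (f x) = 0 := by
        intro x
        apply T.mono (0+1)
        have := congrArg (fun (h : I ⟶ T.J (0+1)) => h x) hf
        rw [map_zero]; exact this
      have hmem : ∀ x, f x ∈ range (T.ι 0) := by
        intro x; rw [T.ex 0]; exact hπf x
      set f₁ : (I : Type) →ₗ[R] T.S 0 :=
        (LinearEquiv.ofInjective (T.ι 0) (T.mono 0)).symm.toLinearMap ∘ₗ
          (LinearMap.codRestrict (range (T.ι 0)) f.hom hmem) with hf₁
      have hf₁c : ∀ x, T.ι 0 (f₁ x) = f x := by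
        intro x
        have : T.ι 0 (f₁ x) =
            ((LinearEquiv.ofInjective (T.ι 0) (T.mono 0))
              ((LinearEquiv.ofInjective (T.ι 0) (T.mono 0)).symm
                ⟨f x, hmem x⟩) : T.J 0) := rfl
        rw [LinearEquiv.apply_symm_apply] at this
        exact this
      -- lift (L.e ∘ T.e.symm ∘ f₁) along L.π 0 (kernel = range (L.ι 0) ≃ L.S 1)
      obtain ⟨s, hs⟩ := L.lif 1 (L.J 0) (L.S 0) (L.ι 0) (L.π 0) (L.mono 0) (L.epi 0)
        (L.ex 0) I hI (L.e.toLinearMap ∘ₗ T.e.symm.toLinearMap ∘ₗ f₁)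
      refine ⟨ModuleCat.ofHom s, ?_⟩
      ext x
      show T.ι 0 (T.e (L.e.symm (L.π 0 (s x)))) = f x
      have : L.π 0 (s x) = L.e (T.e.symm (f₁ x)) := by
        have := congrArg (fun (h : (I : Type) →ₗ[R] L.S 0) => h x) hs
        simpa using this
      rw [this]
      simp [hf₁c x]
    · -- i = negSucc (n+1), f : I ⟶ L.J n
      have hπf : ∀ x, L.π n (f x) = 0 := by
        intro x
        match n with
        | 0 =>
          have := congrArg (fun (h : I ⟶ T.J 0) => h x) hf
          have h0 : T.ι 0 (T.e (L.e.symm (L.π 0 (f x)))) = 0 := this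
          have h1 : T.e (L.e.symm (L.π 0 (f x))) = 0 := by
            apply T.mono 0
            simpa using h0
          have h2 : L.e.symm (L.π 0 (f x)) = 0 := by
            apply T.e.injective; simpa using h1
          have h3 := congrArg L.e h2
          simpa using h3
        | m+1 =>
          have h0 : L.ι m (L.π (m+1) (f x)) = 0 := by
            have := congrArg (fun (h : I ⟶ L.J m) => h x) hf
            exact this
          exact L.mono m (by rw [map_zero]; exact h0)
      have hmem : ∀ x, f x ∈ range (L.ι n) := by
        intro x; rw [L.ex n]; exact hπf x
      set f₁ : (I : Type) →ₗ[R] L.S (n+1) :=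
        (LinearEquiv.ofInjective (L.ι n) (L.mono n)).symm.toLinearMap ∘ₗ
          (LinearMap.codRestrict (range (L.ι n)) f.hom hmem) with hf₁
      have hf₁c : ∀ x, L.ι n (f₁ x) = f x := by
        intro x
        have : L.ι n (f₁ x) =
            ((LinearEquiv.ofInjective (L.ι n) (L.mono n))
              ((LinearEquiv.ofInjective (L.ι n) (L.mono n)).symm
                ⟨f x, hmem x⟩) : L.J n) := rfl
        rw [LinearEquiv.apply_symm_apply] at this
        exact this
      obtain ⟨s, hs⟩ := L.lif (n+2) (L.J (n+1)) (L.S (n+1)) (L.ι (n+1)) (L.π (n+1))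
        (L.mono (n+1)) (L.epi (n+1)) (L.ex (n+1)) I hI f₁
      refine ⟨ModuleCat.ofHom s, ?_⟩
      ext x
      show L.ι n (L.π (n+1) (s x)) = f x
      have : L.π (n+1) (s x) = f₁ x := by
        have := congrArg (fun (h : (I : Type) →ₗ[R] L.S (n+1)) => h x) hs
        simpa using this
      rw [this, hf₁c]
  · -- M ≃ ker (d 0)
    refine ⟨T.e.trans (?_ : (T.S 0 : Type) ≃ₗ[R] _)⟩
    have hker : ker ((T.ι (0+1) ∘ₗ T.π 0 : T.J 0 →ₗ[R] T.J (0+1))) = range (T.ι 0) := by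
      rw [LinearMap.ker_comp, LinearMap.ker_eq_bot.2 (T.mono (0+1)), Submodule.comap_bot,
        T.ex 0]
    exact (LinearEquiv.ofInjective (T.ι 0) (T.mono 0)).trans
      (LinearEquiv.ofEq _ _ hker.symm)

end Towers
section Extract

open CategoryTheory LinearMap

variable {R : Type} [CommRing R]
variable (E : ℤ → ModuleCat.{0} R) (d : ∀ i : ℤ, E i ⟶ E (i + 1))

/-- Cast along an equality of indices. -/
def ecast {i j : ℤ} (h : i = j) : (E i : Type) ≃ₗ[R] E j := h ▸ LinearEquiv.refl R (E i)

lemma ecast_mem_ker {i j : ℤ} (h : i + 1 = j + 1) (hij : i = j) (x : E (i+1))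
    (hx : x ∈ ker (d (i+1)).hom) : ecast E h x ∈ ker (d (j+1)).hom := by
  subst hij
  exact hx

variable (hinj : ∀ i, Module.Injective R (E i))
variable (hex : ∀ i, LinearMap.range (d i).hom = LinearMap.ker (d (i + 1)).hom)
variable (hlift : ∀ (I : ModuleCat.{0} R), Module.Injective R I →
      ∀ (i : ℤ) (f : I ⟶ E (i + 1)), f ≫ d (i + 1) = 0 →
        ∃ g : I ⟶ E i, g ≫ d i = f)

include hinj hex hlift in
/-- Every syzygy of a totally acyclic complex of injectives satisfies `LiftP`. -/
lemma liftP_syzygy (k : ℤ) : LiftP R (ker (d k).hom) := by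
  intro X Y _ _ _ _ ι p hι hp hιp I _ _ hI t
  classical
  -- pullback Z of t and p
  set h : (I × X) →ₗ[R] Y := t ∘ₗ LinearMap.fst R I X - p ∘ₗ LinearMap.snd R I X with hh
  set Z := ker h with hZ
  set fstZ : (Z : Type) →ₗ[R] I := LinearMap.fst R I X ∘ₗ Z.subtype with hfstZ
  have hfst_surj : Function.Surjective fstZ := by
    intro i
    obtain ⟨x, hx⟩ := hp (t i)
    refine ⟨⟨(i, x), ?_⟩, rfl⟩
    have hform : h (i, x) = t i - p x := rfl
    show h (i, x) = 0
    rw [hform, hx, sub_self]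
  -- mono m : ker (d k).hom → Z
  have hm_mem : ∀ s : ker (d k).hom, ((0 : I), ι s) ∈ Z := by
    intro s
    have h0 : ι s ∈ ker p := by rw [← hιp]; exact ⟨s, rfl⟩
    have hps : p (ι s) = 0 := h0
    have hform : h ((0 : I), ι s) = t 0 - p (ι s) := rfl
    have : h ((0 : I), ι s) = 0 := by rw [hform, map_zero, hps, sub_zero]
    exact this
  set m : (ker (d k).hom : Type) →ₗ[R] Z :=
    { toFun := fun s => ⟨((0 : I), ι s), hm_mem s⟩
      map_add' := fun a b => by ext <;> simp
      map_smul' := fun r a => by ext <;> simp } with hm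
  have hm_inj : Function.Injective m := by
    intro a b hab
    apply hι
    have := congrArg (fun z : Z => (z : I × X).2) hab
    exact this
  have hm_range : range m = ker fstZ := by
    ext z
    constructor
    · rintro ⟨s, rfl⟩; rfl
    · intro hz
      have h1 : (z : I × X).1 = 0 := hz
      have h2 : p (z : I × X).2 = 0 := by
        have := z.2
        simp only [hZ, mem_ker, hh, LinearMap.sub_apply, LinearMap.comp_apply] at this
        have h3 : t (z : I × X).1 = p (z : I × X).2 := by
          have := sub_eq_zero.1 this
          exact this
        rw [h1, map_zero] at h3
        exact h3.symm
      have : (z : I × X).2 ∈ ker p := h2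
      rw [← hιp] at this
      obtain ⟨s, hs⟩ := this
      refine ⟨s, ?_⟩
      apply Subtype.ext
      rw [hm]
      show ((0 : I), ι s) = (z : I × X)
      rw [Prod.ext_iff]
      exact ⟨h1.symm, hs⟩
  -- extend the inclusion ker (d k).hom → E k along m, using injectivity of E k
  obtain ⟨α, hα⟩ := (hinj k).out m hm_inj ((ker (d k).hom).subtype)
  -- d k ∘ α kills ker fstZ = range m, so factors through fstZ
  have hcomp : ker fstZ ≤ ker ((d k).hom ∘ₗ α) := by
    intro z hz
    rw [← hm_range] at hz
    obtain ⟨s, rfl⟩ := hz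
    have : α (m s) = (s : E k) := hα s
    have hs : (s : E k) ∈ ker (d k).hom := s.2
    show d k (α (m s)) = 0
    rw [this]
    exact hs
  set β : I →ₗ[R] E (k+1) := factorThru fstZ hfst_surj ((d k).hom ∘ₗ α) hcomp with hβ
  have hβc : ∀ z : Z, β (fstZ z) = d k (α z) := fun z => factorThru_apply _ _ _ _ z
  -- β ≫ d (k+1) = 0
  have βh : ModuleCat.of R I ⟶ E (k+1) := ModuleCat.ofHom β
  have hβd : (ModuleCat.ofHom β) ≫ d (k+1) = 0 := by
    ext i
    obtain ⟨z, rfl⟩ := hfst_surj i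
    show d (k+1) (β (fstZ z)) = 0
    rw [hβc]
    have : d k (α z) ∈ range (d k).hom := ⟨α z, rfl⟩
    rw [hex k] at this
    exact this
  obtain ⟨γ, hγ⟩ := hlift (ModuleCat.of R I) hI k (ModuleCat.ofHom β) hβd
  -- δ := α - γ ∘ fstZ has range in ker (d k).hom
  set δ : (Z : Type) →ₗ[R] E k := α - γ.hom ∘ₗ fstZ with hδ
  have hγc : ∀ i : I, d k (γ i) = β i := by
    intro i
    exact congrArg (fun (h : ModuleCat.of R I ⟶ E (k+1)) => h i) hγ
  have hδk : ∀ z, δ z ∈ ker (d k).hom := by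
    intro z
    show d k (δ z) = 0
    have hform : δ z = α z - γ (fstZ z) := rfl
    rw [hform, map_sub, hγc, hβc, sub_self]
  set r : (Z : Type) →ₗ[R] ker (d k).hom := LinearMap.codRestrict (ker (d k).hom) δ hδk with hr
  have hrm : ∀ s : ker (d k).hom, r (m s) = s := by
    intro s
    apply Subtype.ext
    show δ (m s) = (s : E k)
    have hform : δ (m s) = α (m s) - γ (fstZ (m s)) := rfl
    have h2 : fstZ (m s) = 0 := rfl
    rw [hform, h2, map_zero, sub_zero, hα s]
    rfl
  -- η : Z → X, kills ker fstZ, factors through I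
  set η : (Z : Type) →ₗ[R] X := LinearMap.snd R I X ∘ₗ Z.subtype - ι ∘ₗ r with hη
  have hηk : ker fstZ ≤ ker η := by
    intro z hz
    rw [← hm_range] at hz
    obtain ⟨s, rfl⟩ := hz
    show (LinearMap.snd R I X) (m s : I × X) - ι (r (m s)) = 0
    rw [hrm s]
    show ι s - ι s = 0
    exact sub_self _
  set sfin := factorThru fstZ hfst_surj η hηk with hsfin
  refine ⟨sfin, ?_⟩
  ext i
  show p (sfin i) = t i
  obtain ⟨z, hz⟩ := hfst_surj i
  -- p ∘ η = p ∘ snd  (since p ∘ ι = 0)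
  have h2 : p (η z) = p ((z : I × X).2) := by
    simp only [hη, LinearMap.sub_apply, LinearMap.comp_apply, map_sub]
    have : ι (r z) ∈ ker p := by rw [← hιp]; exact ⟨r z, rfl⟩
    rw [show p (ι (r z)) = 0 from this, sub_zero]
    rfl
  have h3 : p ((z : I × X).2) = t (fstZ z) := by
    have := z.2
    simp only [hZ, mem_ker, hh, LinearMap.sub_apply, LinearMap.comp_apply] at this
    exact (sub_eq_zero.1 this).symm
  rw [← hz, hsfin, factorThru_apply, h2, h3]

lemma ecast_ker {i j : ℤ} (hij : i = j) (x : E i) (hx : x ∈ LinearMap.ker (d i).hom) :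
    ecast E hij x ∈ LinearMap.ker (d j).hom := by
  subst hij
  exact hx

lemma ecast_ecast {i j : ℤ} (h : i = j) (y : E j) : ecast E h (ecast E h.symm y) = y := by
  subst h
  rfl

include hinj hex hlift in
lemma rtow_of_gi {M : Type} [AddCommGroup M] [Module R M]
    (e0 : M ≃ₗ[R] ker (d 0).hom) : Nonempty (RTow R M) := by
  refine ⟨{
    S := fun n => ModuleCat.of R (ker (d (n : ℤ)).hom)
    J := fun n => E (n : ℤ)
    ι := fun n => (ker (d (n : ℤ)).hom).subtype
    π := fun n => LinearMap.codRestrict (ker (d ((n : ℤ) + 1)).hom) (d (n : ℤ)).hom (fun x => by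
      have : d (n : ℤ) x ∈ range (d (n : ℤ)).hom := ⟨x, rfl⟩
      rw [hex (n : ℤ)] at this
      exact this)
    injJ := fun n => hinj (n : ℤ)
    mono := fun n => Submodule.injective_subtype _
    epi := fun n => ?_
    ex := fun n => ?_
    lif := fun n => liftP_syzygy E d hinj hex hlift (n : ℤ)
    e := e0 }⟩
  · intro y
    obtain ⟨yv, hy⟩ := y
    have hy' : (show E ((n : ℤ) + 1) from yv) ∈ ker (d ((n : ℤ) + 1)).hom := hy
    rw [← hex (n : ℤ)] at hy'
    obtain ⟨x, hx⟩ := hy'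
    exact ⟨x, Subtype.ext hx⟩
  · rw [Submodule.range_subtype, LinearMap.ker_codRestrict]

include hinj hex hlift in
lemma ltow_of_gi {M : Type} [AddCommGroup M] [Module R M]
    (e0 : M ≃ₗ[R] ker (d 0).hom) : Nonempty (LTow R M) := by
  have hcast : ∀ n : ℕ, Int.negSucc n + 1 = -(n : ℤ) := by
    intro n
    rw [Int.negSucc_eq]
    ring
  refine ⟨{
    S := fun n => ModuleCat.of R (ker (d (-(n : ℤ))).hom)
    J := fun n => E (Int.negSucc n)
    ι := fun n => ((ker (d (-((n+1 : ℕ) : ℤ))).hom).subtype : _ →ₗ[R] E (Int.negSucc n))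
    π := fun n => LinearMap.codRestrict (ker (d (-(n : ℤ))).hom)
      ((ecast E (hcast n)).toLinearMap ∘ₗ (d (Int.negSucc n)).hom) (fun x => by
        have h1 : d (Int.negSucc n) x ∈ range (d (Int.negSucc n)).hom := ⟨x, rfl⟩
        rw [hex (Int.negSucc n)] at h1
        exact ecast_ker E d (hcast n) _ h1)
    injJ := fun n => hinj (Int.negSucc n)
    mono := fun n => Submodule.injective_subtype _
    epi := fun n => ?_
    ex := fun n => ?_
    lif := fun n => liftP_syzygy E d hinj hex hlift (-(n : ℤ))
    e := e0 }⟩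
  · intro y
    obtain ⟨yv, hy0⟩ := y
    have hy : ecast E (hcast n).symm yv ∈ ker (d (Int.negSucc n + 1)).hom :=
      ecast_ker E d (hcast n).symm _ hy0
    rw [← hex (Int.negSucc n)] at hy
    obtain ⟨x, hx⟩ := hy
    refine ⟨x, Subtype.ext ?_⟩
    show ecast E (hcast n) (d (Int.negSucc n) x) = yv
    rw [hx, ecast_ecast]
  · rw [LinearMap.ker_codRestrict, LinearMap.ker_comp, LinearEquiv.ker, Submodule.comap_bot]
    have h2 : range ((ker (d (-((n+1 : ℕ) : ℤ))).hom).subtype :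
        (ker (d (-((n+1 : ℕ) : ℤ))).hom : Type) →ₗ[R] E (Int.negSucc n))
        = ker (d (Int.negSucc n)).hom := by
      ext x
      constructor
      · rintro ⟨a, rfl⟩
        exact a.2
      · intro hx
        exact ⟨⟨x, hx⟩, rfl⟩
    exact h2

end Extract
section Ext

open CategoryTheory LinearMap

variable {R : Type} [CommRing R]

/-- A short exact sequence `0 → A → W → B → 0` with abstract middle. -/
structure SESd (A B : ModuleCat.{0} R) where
  W : ModuleCat.{0} R
  u : A →ₗ[R] W
  v : W →ₗ[R] B
  hu : Function.Injective u
  hv : Function.Surjective v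
  huv : range u = ker v

section ExtRight

variable {A B Wm : Type}
variable [AddCommGroup A] [Module R A] [AddCommGroup B] [Module R B]
variable [AddCommGroup Wm] [Module R Wm]
variable (TA : RTow R A) (TB : RTow R B)

noncomputable def alphaR (n : ℕ) (X : SESd (TA.S n) (TB.S n)) : (X.W : Type) →ₗ[R] TA.J n :=
  Classical.choose ((TA.injJ n).out X.u X.hu (TA.ι n))

lemma alphaR_spec (n : ℕ) (X : SESd (TA.S n) (TB.S n)) (a : TA.S n) :
    alphaR TA TB n X (X.u a) = TA.ι n a :=
  Classical.choose_spec ((TA.injJ n).out X.u X.hu (TA.ι n)) a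

noncomputable def embR (n : ℕ) (X : SESd (TA.S n) (TB.S n)) :
    (X.W : Type) →ₗ[R] (TA.J n × TB.J n) :=
  LinearMap.prod (alphaR TA TB n X) (TB.ι n ∘ₗ X.v)

lemma embR_mono (n : ℕ) (X : SESd (TA.S n) (TB.S n)) : Function.Injective (embR TA TB n X) := by
  rw [← LinearMap.ker_eq_bot]
  apply (Submodule.eq_bot_iff _).2
  intro w hw
  have hw' : embR TA TB n X w = 0 := hw
  have h1 : alphaR TA TB n X w = 0 := congrArg Prod.fst hw'
  have h2 : TB.ι n (X.v w) = 0 := congrArg Prod.snd hw'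
  have h3 : X.v w = 0 := TB.mono n (by rw [h2, map_zero])
  have h4 : w ∈ ker X.v := h3
  rw [← X.huv] at h4
  obtain ⟨a, rfl⟩ := h4
  rw [alphaR_spec] at h1
  rw [TA.mono n (by rw [h1, map_zero] : TA.ι n a = TA.ι n 0), map_zero]

lemma embR_u (n : ℕ) (X : SESd (TA.S n) (TB.S n)) (a : TA.S n) :
    embR TA TB n X (X.u a) = (TA.ι n a, 0) := by
  have h1 : X.v (X.u a) = 0 := by
    have : X.u a ∈ ker X.v := by rw [← X.huv]; exact ⟨a, rfl⟩
    exact this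
  show (alphaR TA TB n X (X.u a), TB.ι n (X.v (X.u a))) = (TA.ι n a, 0)
  rw [alphaR_spec, h1, map_zero]

/-- One step of the right horseshoe. -/
noncomputable def stepR (n : ℕ) (X : SESd (TA.S n) (TB.S n)) :
    SESd (TA.S (n+1)) (TB.S (n+1)) where
  W := ModuleCat.of R ((TA.J n × TB.J n) ⧸ range (embR TA TB n X))
  u := factorThru (TA.π n) (TA.epi n)
    ((range (embR TA TB n X)).mkQ ∘ₗ LinearMap.inl R (TA.J n) (TB.J n))
    (by
      intro x hx
      have hx' : x ∈ range (TA.ι n) := by rw [TA.ex n]; exact hx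
      obtain ⟨a, rfl⟩ := hx'
      show (range (embR TA TB n X)).mkQ (TA.ι n a, 0) = 0
      rw [Submodule.mkQ_apply, Submodule.Quotient.mk_eq_zero]
      exact ⟨X.u a, embR_u TA TB n X a⟩)
  v := Submodule.liftQ (range (embR TA TB n X))
    (TB.π n ∘ₗ LinearMap.snd R (TA.J n) (TB.J n))
    (by
      rintro _ ⟨w, rfl⟩
      show TB.π n (TB.ι n (X.v w)) = 0
      have : TB.ι n (X.v w) ∈ ker (TB.π n) := by rw [← TB.ex n]; exact ⟨X.v w, rfl⟩
      exact this)
  hu := by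
    intro s s' hss
    obtain ⟨x, rfl⟩ := TA.epi n s
    obtain ⟨x', rfl⟩ := TA.epi n s'
    rw [factorThru_apply, factorThru_apply] at hss
    have h0 : Submodule.Quotient.mk (p := range (embR TA TB n X)) (x, (0 : TB.J n)) =
        Submodule.Quotient.mk (x', (0 : TB.J n)) := hss
    have h1 : ((x - x' : TA.J n), (0 : TB.J n)) ∈ range (embR TA TB n X) := by
      have h2 := (Submodule.Quotient.eq _).1 h0
      have heq : ((x, (0 : TB.J n)) - (x', (0 : TB.J n))) = ((x - x' : TA.J n), (0 : TB.J n)) := by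
        rw [Prod.mk_sub_mk, sub_zero]
      rwa [heq] at h2
    obtain ⟨w, hw⟩ := h1
    have h2 : TB.ι n (X.v w) = 0 := congrArg Prod.snd hw
    have h3 : X.v w = 0 := TB.mono n (by rw [h2, map_zero])
    have h4 : w ∈ ker X.v := h3
    rw [← X.huv] at h4
    obtain ⟨a, rfl⟩ := h4
    have h5 : alphaR TA TB n X (X.u a) = x - x' := congrArg Prod.fst hw
    rw [alphaR_spec] at h5
    rw [← sub_eq_zero, ← map_sub]
    have h6 : x - x' ∈ ker (TA.π n) := by rw [← TA.ex n]; exact ⟨a, h5⟩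
    exact h6
  hv := by
    intro b'
    obtain ⟨y, hy⟩ := TB.epi n b'
    exact ⟨(range (embR TA TB n X)).mkQ (0, y), hy⟩
  huv := by
    ext q
    constructor
    · rintro ⟨s, rfl⟩
      obtain ⟨x, rfl⟩ := TA.epi n s
      rw [mem_ker, factorThru_apply]
      show TB.π n 0 = 0
      exact map_zero _
    · intro hq
      obtain ⟨⟨x, y⟩, rfl⟩ := Submodule.mkQ_surjective _ q
      have hq' : TB.π n y = 0 := hq
      have hy : y ∈ range (TB.ι n) := by rw [TB.ex n]; exact hq'
      obtain ⟨b, rfl⟩ := hy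
      obtain ⟨w, rfl⟩ := X.hv b
      refine ⟨TA.π n (x - alphaR TA TB n X w), ?_⟩
      rw [factorThru_apply]
      show (range (embR TA TB n X)).mkQ (x - alphaR TA TB n X w, 0) =
        (range (embR TA TB n X)).mkQ (x, TB.ι n (X.v w))
      rw [Submodule.mkQ_apply, Submodule.mkQ_apply, Submodule.Quotient.eq]
      refine ⟨-w, ?_⟩
      have hw : embR TA TB n X w = (alphaR TA TB n X w, TB.ι n (X.v w)) := rfl
      rw [map_neg, hw, Prod.mk_sub_mk, Prod.neg_mk]
      refine Prod.ext_iff.2 ⟨?_, ?_⟩ <;> · show _ = _; abel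

/-- The recursively built sequence of short exact sequences. -/
noncomputable def stR (X0 : SESd (TA.S 0) (TB.S 0)) : ∀ n, SESd (TA.S n) (TB.S n) :=
  fun n => Nat.rec X0 (fun n X => stepR TA TB n X) n

/-- Right towers are closed under extensions: tower on the middle of a SES. -/
noncomputable def rtow_ext' (W0 : ModuleCat.{0} R) (u : TA.S 0 →ₗ[R] W0)
    (v : W0 →ₗ[R] TB.S 0) (hu : Function.Injective u) (hv : Function.Surjective v)
    (huv : range u = ker v) : RTow R W0 :=
  let X0 : SESd (TA.S 0) (TB.S 0) := ⟨W0, u, v, hu, hv, huv⟩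
  { S := fun n => (stR TA TB X0 n).W
    J := fun n => ModuleCat.of R (TA.J n × TB.J n)
    ι := fun n => embR TA TB n (stR TA TB X0 n)
    π := fun n => (range (embR TA TB n (stR TA TB X0 n))).mkQ
    injJ := fun n => injective_prod (TA.injJ n) (TB.injJ n)
    mono := fun n => embR_mono TA TB n (stR TA TB X0 n)
    epi := fun n => Submodule.mkQ_surjective _
    ex := fun n => (Submodule.ker_mkQ _).symm
    lif := fun n => liftP_ext (stR TA TB X0 n).u (stR TA TB X0 n).v
      (stR TA TB X0 n).hu (stR TA TB X0 n).hv (stR TA TB X0 n).huv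
      (TA.lif n) (TB.lif n)
    e := LinearEquiv.refl R W0 }

/-- Right towers are closed under extensions (abstract-module version). -/
lemma rtow_ext (TA' : RTow R A) (TB' : RTow R B) (u : A →ₗ[R] Wm) (v : Wm →ₗ[R] B)
    (hu : Function.Injective u) (hv : Function.Surjective v) (huv : range u = ker v) :
    Nonempty (RTow R Wm) := by
  have TA := TA'
  have TB := TB'
  have hu0 : Function.Injective (u ∘ₗ TA.e.symm.toLinearMap) :=
    fun a b hab => TA.e.symm.injective (hu hab)
  have hv0 : Function.Surjective (TB.e.toLinearMap ∘ₗ v) := by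
    intro b
    obtain ⟨w, hw⟩ := hv (TB.e.symm b)
    refine ⟨w, ?_⟩
    show TB.e (v w) = b
    rw [hw]
    exact TB.e.apply_symm_apply b
  have huv0 : range (u ∘ₗ TA.e.symm.toLinearMap) = ker (TB.e.toLinearMap ∘ₗ v) := by
    ext w
    constructor
    · rintro ⟨a, rfl⟩
      show TB.e (v (u (TA.e.symm a))) = 0
      have h : u (TA.e.symm a) ∈ ker v := by rw [← huv]; exact ⟨_, rfl⟩
      have h0 : v (u (TA.e.symm a)) = 0 := h
      rw [h0, map_zero]
    · intro hw
      have h0 : TB.e (v w) = 0 := hw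
      have h1 : v w = 0 := by
        apply TB.e.injective
        rw [h0, map_zero]
      have h2 : w ∈ ker v := h1
      rw [← huv] at h2
      obtain ⟨a, rfl⟩ := h2
      exact ⟨TA.e a, by show u (TA.e.symm (TA.e a)) = u a; rw [TA.e.symm_apply_apply]⟩
  exact ⟨rtow_ext' TA TB (ModuleCat.of R Wm) (u ∘ₗ TA.e.symm.toLinearMap)
    (TB.e.toLinearMap ∘ₗ v) hu0 hv0 huv0⟩

end ExtRight
end Ext
section ExtLeft

open CategoryTheory LinearMap

variable {R : Type} [CommRing R]
variable {A B Wm : Type}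
variable [AddCommGroup A] [Module R A] [AddCommGroup B] [Module R B]
variable [AddCommGroup Wm] [Module R Wm]
variable (TA : LTow R A) (TB : LTow R B)

noncomputable def thetaL (n : ℕ) (X : SESd (TA.S n) (TB.S n)) : (TB.J n : Type) →ₗ[R] X.W :=
  Classical.choose (TA.lif n X.W (TB.S n) X.u X.v X.hu X.hv X.huv (TB.J n) (TB.injJ n) (TB.π n))

lemma thetaL_spec (n : ℕ) (X : SESd (TA.S n) (TB.S n)) (y : TB.J n) :
    X.v (thetaL TA TB n X y) = TB.π n y := by
  have h := Classical.choose_spec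
    (TA.lif n X.W (TB.S n) X.u X.v X.hu X.hv X.huv (TB.J n) (TB.injJ n) (TB.π n))
  exact congrArg (fun (m : (TB.J n : Type) →ₗ[R] TB.S n) => m y) h

noncomputable def psiL (n : ℕ) (X : SESd (TA.S n) (TB.S n)) :
    (TA.J n × TB.J n : Type) →ₗ[R] X.W :=
  X.u ∘ₗ TA.π n ∘ₗ LinearMap.fst R (TA.J n) (TB.J n) +
    thetaL TA TB n X ∘ₗ LinearMap.snd R (TA.J n) (TB.J n)

lemma psiL_apply (n : ℕ) (X : SESd (TA.S n) (TB.S n)) (x : TA.J n) (y : TB.J n) :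
    psiL TA TB n X (x, y) = X.u (TA.π n x) + thetaL TA TB n X y := rfl

lemma psiL_epi (n : ℕ) (X : SESd (TA.S n) (TB.S n)) : Function.Surjective (psiL TA TB n X) := by
  intro w
  obtain ⟨y, hy⟩ := TB.epi n (X.v w)
  have h1 : X.v (w - thetaL TA TB n X y) = 0 := by
    rw [map_sub, thetaL_spec, hy, sub_self]
  have h2 : w - thetaL TA TB n X y ∈ ker X.v := h1
  rw [← X.huv] at h2
  obtain ⟨a, ha⟩ := h2
  obtain ⟨x, hx⟩ := TA.epi n a
  refine ⟨(x, y), ?_⟩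
  rw [psiL_apply, hx, ha]
  abel

lemma sndmem (n : ℕ) (X : SESd (TA.S n) (TB.S n)) :
    ∀ z : ker (psiL TA TB n X),
      ((LinearMap.snd R (TA.J n) (TB.J n)) ∘ₗ (ker (psiL TA TB n X)).subtype) z
        ∈ range (TB.ι n) := by
  rintro ⟨⟨x, y⟩, hz⟩
  have hz' : X.u (TA.π n x) + thetaL TA TB n X y = 0 := hz
  show y ∈ range (TB.ι n)
  rw [TB.ex n]
  show TB.π n y = 0
  rw [← thetaL_spec TA TB n X y]
  have h3 : thetaL TA TB n X y = - X.u (TA.π n x) := by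
    rw [eq_neg_iff_add_eq_zero, add_comm]
    exact hz'
  rw [h3, map_neg]
  have h4 : X.u (TA.π n x) ∈ ker X.v := by rw [← X.huv]; exact ⟨_, rfl⟩
  have h5 : X.v (X.u (TA.π n x)) = 0 := h4
  rw [h5, neg_zero]

/-- One step of the left horseshoe. -/
noncomputable def stepL (n : ℕ) (X : SESd (TA.S n) (TB.S n)) :
    SESd (TA.S (n+1)) (TB.S (n+1)) where
  W := ModuleCat.of R (ker (psiL TA TB n X))
  u := LinearMap.codRestrict (ker (psiL TA TB n X))
    ((LinearMap.inl R (TA.J n) (TB.J n)) ∘ₗ TA.ι n)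
    (by
      intro a'
      show psiL TA TB n X (TA.ι n a', 0) = 0
      rw [psiL_apply, map_zero, add_zero]
      have h1 : TA.ι n a' ∈ ker (TA.π n) := by rw [← TA.ex n]; exact ⟨a', rfl⟩
      have h2 : TA.π n (TA.ι n a') = 0 := h1
      rw [h2, map_zero])
  v := (LinearEquiv.ofInjective (TB.ι n) (TB.mono n)).symm.toLinearMap ∘ₗ
    LinearMap.codRestrict (range (TB.ι n))
      ((LinearMap.snd R (TA.J n) (TB.J n)) ∘ₗ (ker (psiL TA TB n X)).subtype)
      (fun z => sndmem TA TB n X z)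
  hu := by
    intro a a' ha
    have h1 : TA.ι n a = TA.ι n a' := by
      have := congrArg (fun z : ker (psiL TA TB n X) => (z : TA.J n × TB.J n).1) ha
      exact this
    exact TA.mono n h1
  hv := by
    intro b'
    have h1 : TB.π n (TB.ι n b') = 0 := by
      have : TB.ι n b' ∈ ker (TB.π n) := by rw [← TB.ex n]; exact ⟨b', rfl⟩
      exact this
    have h2 : X.v (thetaL TA TB n X (TB.ι n b')) = 0 := by rw [thetaL_spec, h1]
    have h3 : thetaL TA TB n X (TB.ι n b') ∈ ker X.v := h2
    rw [← X.huv] at h3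
    obtain ⟨a, ha⟩ := h3
    obtain ⟨x, hx⟩ := TA.epi n a
    have hz : ((-x, TB.ι n b') : TA.J n × TB.J n) ∈ ker (psiL TA TB n X) := by
      show psiL TA TB n X (-x, TB.ι n b') = 0
      rw [psiL_apply, map_neg, map_neg, hx, ha]
      abel
    refine ⟨⟨(-x, TB.ι n b'), hz⟩, ?_⟩
    show (LinearEquiv.ofInjective (TB.ι n) (TB.mono n)).symm ⟨TB.ι n b', ⟨b', rfl⟩⟩ = b'
    rw [LinearEquiv.symm_apply_eq]
    apply Subtype.ext
    show TB.ι n b' = ((LinearEquiv.ofInjective (TB.ι n) (TB.mono n)) b' : TB.J n)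
    rw [LinearEquiv.ofInjective_apply]
  huv := by
    ext z
    constructor
    · rintro ⟨a', rfl⟩
      show (LinearEquiv.ofInjective (TB.ι n) (TB.mono n)).symm ⟨(0 : TB.J n), _⟩ = 0
      have : (⟨(0 : TB.J n), by exact Submodule.zero_mem _⟩ :
          range (TB.ι n)) = 0 := rfl
      rw [show (⟨(0 : TB.J n), _⟩ : range (TB.ι n)) = 0 from rfl, map_zero]
    · intro hz
      obtain ⟨⟨x, y⟩, hzmem⟩ := z
      have h1 : (LinearEquiv.ofInjective (TB.ι n) (TB.mono n)).symm
          (LinearMap.codRestrict (range (TB.ι n))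
            ((LinearMap.snd R (TA.J n) (TB.J n)) ∘ₗ (ker (psiL TA TB n X)).subtype)
            (fun z => sndmem TA TB n X z) ⟨(x, y), hzmem⟩) = 0 := hz
      have h2 := congrArg (LinearEquiv.ofInjective (TB.ι n) (TB.mono n)) h1
      rw [LinearEquiv.apply_symm_apply, map_zero] at h2
      have h3 : y = 0 := congrArg Subtype.val h2
      subst h3
      have h4 : X.u (TA.π n x) = 0 := by
        have h5 : X.u (TA.π n x) + thetaL TA TB n X 0 = 0 := hzmem
        rwa [map_zero, add_zero] at h5
      have h6 : TA.π n x = 0 := by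
        apply X.hu
        rw [h4, map_zero]
      have h7 : x ∈ range (TA.ι n) := by rw [TA.ex n]; exact h6
      obtain ⟨a', ha'⟩ := h7
      refine ⟨a', Subtype.ext ?_⟩
      show ((TA.ι n a', 0) : TA.J n × TB.J n) = (x, 0)
      rw [ha']

noncomputable def stL (X0 : SESd (TA.S 0) (TB.S 0)) : ∀ n, SESd (TA.S n) (TB.S n) :=
  fun n => Nat.rec X0 (fun n X => stepL TA TB n X) n

/-- Left towers are closed under extensions. -/
noncomputable def ltow_ext' (W0 : ModuleCat.{0} R) (u : TA.S 0 →ₗ[R] W0)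
    (v : W0 →ₗ[R] TB.S 0) (hu : Function.Injective u) (hv : Function.Surjective v)
    (huv : range u = ker v) : LTow R W0 :=
  let X0 : SESd (TA.S 0) (TB.S 0) := ⟨W0, u, v, hu, hv, huv⟩
  { S := fun n => (stL TA TB X0 n).W
    J := fun n => ModuleCat.of R (TA.J n × TB.J n)
    ι := fun n => (ker (psiL TA TB n (stL TA TB X0 n))).subtype
    π := fun n => psiL TA TB n (stL TA TB X0 n)
    injJ := fun n => injective_prod (TA.injJ n) (TB.injJ n)
    mono := fun n => Submodule.injective_subtype _
    epi := fun n => psiL_epi TA TB n (stL TA TB X0 n)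
    ex := fun n => Submodule.range_subtype _
    lif := fun n => liftP_ext (stL TA TB X0 n).u (stL TA TB X0 n).v
      (stL TA TB X0 n).hu (stL TA TB X0 n).hv (stL TA TB X0 n).huv
      (TA.lif n) (TB.lif n)
    e := LinearEquiv.refl R W0 }

lemma ltow_ext (TA' : LTow R A) (TB' : LTow R B) (u : A →ₗ[R] Wm) (v : Wm →ₗ[R] B)
    (hu : Function.Injective u) (hv : Function.Surjective v) (huv : range u = ker v) :
    Nonempty (LTow R Wm) := by
  have TA := TA'
  have TB := TB'
  have hu0 : Function.Injective (u ∘ₗ TA.e.symm.toLinearMap) :=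
    fun a b hab => TA.e.symm.injective (hu hab)
  have hv0 : Function.Surjective (TB.e.toLinearMap ∘ₗ v) := by
    intro b
    obtain ⟨w, hw⟩ := hv (TB.e.symm b)
    refine ⟨w, ?_⟩
    show TB.e (v w) = b
    rw [hw]
    exact TB.e.apply_symm_apply b
  have huv0 : range (u ∘ₗ TA.e.symm.toLinearMap) = ker (TB.e.toLinearMap ∘ₗ v) := by
    ext w
    constructor
    · rintro ⟨a, rfl⟩
      show TB.e (v (u (TA.e.symm a))) = 0
      have h : u (TA.e.symm a) ∈ ker v := by rw [← huv]; exact ⟨_, rfl⟩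
      have h0 : v (u (TA.e.symm a)) = 0 := h
      rw [h0, map_zero]
    · intro hw
      have h0 : TB.e (v w) = 0 := hw
      have h1 : v w = 0 := by
        apply TB.e.injective
        rw [h0, map_zero]
      have h2 : w ∈ ker v := h1
      rw [← huv] at h2
      obtain ⟨a, rfl⟩ := h2
      exact ⟨TA.e a, by show u (TA.e.symm (TA.e a)) = u a; rw [TA.e.symm_apply_apply]⟩
  exact ⟨ltow_ext' TA TB (ModuleCat.of R Wm) (u ∘ₗ TA.e.symm.toLinearMap)
    (TB.e.toLinearMap ∘ₗ v) hu0 hv0 huv0⟩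

end ExtLeft
section SplitStuff

open CategoryTheory LinearMap

variable {R : Type} [CommRing R]

/-- The trivial right tower on an injective module. -/
noncomputable def rtow_inj {I : Type} [AddCommGroup I] [Module R I]
    (hI : Module.Injective R I) : RTow R I where
  S := fun n => match n with | 0 => ModuleCat.of R I | _+1 => ModuleCat.of R PUnit
  J := fun n => match n with | 0 => ModuleCat.of R I | _+1 => ModuleCat.of R PUnit
  ι := fun n => match n with | 0 => LinearMap.id | _+1 => 0
  π := fun n => 0
  injJ := fun n => match n with | 0 => hI | _+1 => injective_punit
  mono := fun n => match n with
    | 0 => fun a b h => h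
    | _+1 => fun a b h => Subsingleton.elim a b
  epi := fun n => match n with
    | 0 => fun y => ⟨0, Subsingleton.elim _ _⟩
    | _+1 => fun y => ⟨0, Subsingleton.elim _ _⟩
  ex := fun n => match n with
    | 0 => by
      ext x
      simp only [LinearMap.mem_range, LinearMap.mem_ker]
      constructor
      · rintro ⟨a, rfl⟩; trivial
      · intro _; exact ⟨x, rfl⟩
    | m+1 => by
      ext x
      simp only [LinearMap.mem_range, LinearMap.mem_ker]
      constructor
      · rintro ⟨a, -⟩; trivial
      · intro _; exact ⟨0, trivial⟩
  lif := fun n => match n with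
    | 0 => liftP_of_injective hI
    | _+1 => liftP_of_injective injective_punit
  e := LinearEquiv.refl R I

/-- If `0 → I → P → C → 0` is exact with `I` injective, then `LiftP P` implies `LiftP C`. -/
lemma liftP_split {I P C : Type} [AddCommGroup I] [Module R I] [AddCommGroup P] [Module R P]
    [AddCommGroup C] [Module R C]
    (j : I →ₗ[R] P) (q : P →ₗ[R] C) (hj : Function.Injective j) (hq : Function.Surjective q)
    (hjq : range j = ker q) (hI : Module.Injective R I) (hP : LiftP R P) : LiftP R C := by
  obtain ⟨ρ, hρ⟩ := hI.out j hj LinearMap.id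
  -- section σ of q
  have hτker : ker q ≤ ker (LinearMap.id - j ∘ₗ ρ) := by
    intro x hx
    rw [← hjq] at hx
    obtain ⟨i, rfl⟩ := hx
    show j i - j (ρ (j i)) = 0
    rw [hρ i]
    show j i - j i = 0
    rw [sub_self]
  set σ := factorThru q hq (LinearMap.id - j ∘ₗ ρ) hτker with hσ
  have hqσ : ∀ c, q (σ c) = c := by
    intro c
    obtain ⟨x, rfl⟩ := hq c
    rw [hσ, factorThru_apply]
    show q (x - j (ρ x)) = q x
    rw [map_sub]
    have : j (ρ x) ∈ ker q := by rw [← hjq]; exact ⟨ρ x, rfl⟩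
    rw [show q (j (ρ x)) = 0 from this, sub_zero]
  -- now prove LiftP C
  intro X Y _ _ _ _ ι p hι hp hιp I' _ _ hI' t
  set m' : P →ₗ[R] I × X := LinearMap.prod ρ (ι ∘ₗ q) with hm'
  set p' : (I × X : Type) →ₗ[R] Y := p ∘ₗ LinearMap.snd R I X with hp'
  have hm'_inj : Function.Injective m' := by
    rw [← LinearMap.ker_eq_bot]
    apply (Submodule.eq_bot_iff _).2
    intro w hw
    have hw' : (ρ w, ι (q w)) = (0 : I × X) := hw
    have h1 : ρ w = 0 := congrArg Prod.fst hw'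
    have h2 : ι (q w) = 0 := congrArg Prod.snd hw'
    have h3 : q w = 0 := hι (by rw [h2, map_zero])
    have h4 : w ∈ ker q := h3
    rw [← hjq] at h4
    obtain ⟨i, rfl⟩ := h4
    rw [hρ i] at h1
    show j i = 0
    rw [show i = (0 : I) from h1, map_zero]
  have hp'_surj : Function.Surjective p' := by
    intro y
    obtain ⟨x, hx⟩ := hp y
    exact ⟨(0, x), hx⟩
  have hm'p' : range m' = ker p' := by
    ext z
    constructor
    · rintro ⟨w, rfl⟩
      show p (ι (q w)) = 0
      have : ι (q w) ∈ ker p := by rw [← hιp]; exact ⟨q w, rfl⟩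
      exact this
    · intro hz
      obtain ⟨i, x⟩ := z
      have hx : p x = 0 := hz
      have hx' : x ∈ ker p := hx
      rw [← hιp] at hx'
      obtain ⟨c, rfl⟩ := hx'
      refine ⟨σ c + j (i - ρ (σ c)), ?_⟩
      have hρval : ρ (σ c + j (i - ρ (σ c))) = i := by
        rw [map_add, hρ]
        show ρ (σ c) + (i - ρ (σ c)) = i
        abel
      have hqval : q (σ c + j (i - ρ (σ c))) = c := by
        rw [map_add]
        have : j (i - ρ (σ c)) ∈ ker q := by rw [← hjq]; exact ⟨_, rfl⟩
        rw [show q (j (i - ρ (σ c))) = 0 from this, add_zero, hqσ]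
      show (ρ _, ι (q _)) = (i, ι c)
      rw [hρval, hqval]
  obtain ⟨s', hs'⟩ := hP (I × X) Y m' p' hm'_inj hp'_surj hm'p' I' hI' t
  refine ⟨LinearMap.snd R I X ∘ₗ s', ?_⟩
  ext i'
  have := congrArg (fun (m : I' →ₗ[R] Y) => m i') hs'
  exact this

end SplitStuff
section Coker

open CategoryTheory LinearMap

variable {R : Type} [CommRing R]

/-- If `0 → I → P → C → 0` is exact with `I` injective and `P` has a right tower,
then `C` has a right tower. -/
lemma rtow_of_split {I P C : Type} [AddCommGroup I] [Module R I] [AddCommGroup P] [Module R P]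
    [AddCommGroup C] [Module R C]
    (j : I →ₗ[R] P) (q : P →ₗ[R] C) (hj : Function.Injective j) (hq : Function.Surjective q)
    (hjq : range j = ker q) (hI : Module.Injective R I) (TP : RTow R P)
    (hC : LiftP R C) : Nonempty (RTow R C) := by
  classical
  obtain ⟨ρ, hρ⟩ := hI.out j hj LinearMap.id
  have hτker : ker q ≤ ker (LinearMap.id - j ∘ₗ ρ) := by
    intro x hx
    rw [← hjq] at hx
    obtain ⟨i, rfl⟩ := hx
    show j i - j (ρ (j i)) = 0
    rw [hρ i]
    show j i - j i = 0
    rw [sub_self]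
  set σ := factorThru q hq (LinearMap.id - j ∘ₗ ρ) hτker with hσ
  have hqσ : ∀ c, q (σ c) = c := by
    intro c
    obtain ⟨x, rfl⟩ := hq c
    rw [hσ, factorThru_apply]
    show q (x - j (ρ x)) = q x
    rw [map_sub]
    have : j (ρ x) ∈ ker q := by rw [← hjq]; exact ⟨ρ x, rfl⟩
    rw [show q (j (ρ x)) = 0 from this, sub_zero]
  have hσ_inj : Function.Injective σ := by
    intro a b hab
    rw [← hqσ a, ← hqσ b, hab]
  -- embed C into TP.J 0
  set u'' : C →ₗ[R] TP.J 0 := TP.ι 0 ∘ₗ TP.e.toLinearMap ∘ₗ σ with hu''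
  have hu''_inj : Function.Injective u'' := by
    intro a b hab
    exact hσ_inj (TP.e.injective (TP.mono 0 hab))
  set Q := (TP.J 0 : Type) ⧸ range u'' with hQ
  -- the SES 0 → I → Q → TP.S 1 → 0
  set jQ : I →ₗ[R] Q := (range u'').mkQ ∘ₗ TP.ι 0 ∘ₗ TP.e.toLinearMap ∘ₗ j with hjQ
  have hjQ_inj : Function.Injective jQ := by
    rw [← LinearMap.ker_eq_bot]
    apply (Submodule.eq_bot_iff _).2
    intro i hi
    have h1 : (range u'').mkQ (TP.ι 0 (TP.e (j i))) = 0 := hi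
    rw [Submodule.mkQ_apply, Submodule.Quotient.mk_eq_zero] at h1
    obtain ⟨c, hc⟩ := h1
    have h2 : TP.ι 0 (TP.e (σ c)) = TP.ι 0 (TP.e (j i)) := hc
    have h3 : σ c = j i := TP.e.injective (TP.mono 0 h2)
    have h4 : c = 0 := by
      have := congrArg q h3
      rw [hqσ] at this
      have hji : j i ∈ ker q := by rw [← hjq]; exact ⟨i, rfl⟩
      rw [show q (j i) = 0 from hji] at this
      exact this
    rw [h4, map_zero] at h3
    exact hj (by rw [map_zero, ← h3])
  set qQ : Q →ₗ[R] TP.S 1 := Submodule.liftQ (range u'') (TP.π 0)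
    (by
      rintro _ ⟨c, rfl⟩
      have : TP.ι 0 (TP.e (σ c)) ∈ ker (TP.π 0) := by
        rw [← TP.ex 0]; exact ⟨TP.e (σ c), rfl⟩
      exact this) with hqQ
  have hqQ_surj : Function.Surjective qQ := by
    intro s
    obtain ⟨x, hx⟩ := TP.epi 0 s
    exact ⟨(range u'').mkQ x, hx⟩
  have hbig : range jQ = ker qQ := by
    ext z
    constructor
    · rintro ⟨i, rfl⟩
      show TP.π 0 (TP.ι 0 (TP.e (j i))) = 0
      have : TP.ι 0 (TP.e (j i)) ∈ ker (TP.π 0) := by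
        rw [← TP.ex 0]; exact ⟨TP.e (j i), rfl⟩
      exact this
    · intro hz
      obtain ⟨w, rfl⟩ := Submodule.mkQ_surjective _ z
      have hw : TP.π 0 w = 0 := hz
      have hw' : w ∈ range (TP.ι 0) := by rw [TP.ex 0]; exact hw
      obtain ⟨s, rfl⟩ := hw'
      set y := TP.e.symm s with hy
      have hs : s = TP.e y := by rw [hy, TP.e.apply_symm_apply]
      -- decompose y = σ (q y) + j i
      have hker : y - σ (q y) ∈ ker q := by
        show q (y - σ (q y)) = 0
        rw [map_sub, hqσ, sub_self]
      rw [← hjq] at hker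
      obtain ⟨i, hi⟩ := hker
      refine ⟨i, ?_⟩
      show (range u'').mkQ (TP.ι 0 (TP.e (j i))) = (range u'').mkQ (TP.ι 0 s)
      rw [Submodule.mkQ_apply, Submodule.mkQ_apply, Submodule.Quotient.eq]
      refine ⟨-(q y), ?_⟩
      show TP.ι 0 (TP.e (σ (-(q y)))) = TP.ι 0 (TP.e (j i)) - TP.ι 0 s
      rw [hs, ← map_sub, ← map_sub, map_neg, hi]
      show TP.ι 0 (TP.e (-(σ (q y)))) = TP.ι 0 (TP.e (y - σ (q y) - y))
      congr 1
      apply congrArg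
      abel
  have hLiftQ : LiftP R Q :=
    liftP_ext jQ qQ hjQ_inj hqQ_surj hbig (liftP_of_injective hI) (TP.lif 1)
  obtain ⟨TQ⟩ := rtow_ext (rtow_inj hI) TP.shift jQ qQ hjQ_inj hqQ_surj hbig
  refine ⟨{
    S := fun n => match n with | 0 => ModuleCat.of R C | n+1 => TQ.S n
    J := fun n => match n with | 0 => TP.J 0 | n+1 => TQ.J n
    ι := fun n => match n with | 0 => u'' | n+1 => TQ.ι n
    π := fun n => match n with
      | 0 => TQ.e.toLinearMap ∘ₗ (range u'').mkQ
      | n+1 => TQ.π n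
    injJ := fun n => match n with | 0 => TP.injJ 0 | n+1 => TQ.injJ n
    mono := fun n => match n with | 0 => hu''_inj | n+1 => TQ.mono n
    epi := fun n => match n with
      | 0 => fun s => by
        obtain ⟨x, hx⟩ := Submodule.mkQ_surjective (range u'') (TQ.e.symm s)
        exact ⟨x, by show TQ.e ((range u'').mkQ x) = s; rw [hx, TQ.e.apply_symm_apply]⟩
      | n+1 => TQ.epi n
    ex := fun n => match n with
      | 0 => by
        ext x
        constructor
        · rintro ⟨c, rfl⟩
          show TQ.e ((range u'').mkQ (u'' c)) = 0
          have h0 : (range u'').mkQ (u'' c) = 0 := by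
            rw [Submodule.mkQ_apply, Submodule.Quotient.mk_eq_zero]
            exact ⟨c, rfl⟩
          rw [h0, map_zero]
        · intro hx
          have h0 : TQ.e ((range u'').mkQ x) = 0 := hx
          have h1 : (range u'').mkQ x = 0 := by
            apply TQ.e.injective
            rw [h0, map_zero]
          rw [Submodule.mkQ_apply, Submodule.Quotient.mk_eq_zero] at h1
          exact h1
      | n+1 => TQ.ex n
    lif := fun n => match n with | 0 => hC | n+1 => TQ.lif n
    e := LinearEquiv.refl R C }⟩

end Coker
section MainLemmas

open CategoryTheory LinearMap

variable {R : Type} [CommRing R]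
variable {A B C : Type}
variable [AddCommGroup A] [Module R A] [AddCommGroup B] [Module R B]
variable [AddCommGroup C] [Module R C]
variable (f : A →ₗ[R] B) (g : B →ₗ[R] C)

/-- Given `0 → A → B → C → 0` with right towers on `A` and `B`, the quotient `C`
satisfies `LiftP` and has a right tower. -/
lemma coker_towers (hf : Function.Injective f) (hg : Function.Surjective g)
    (hfg : range f = ker g) (TA : RTow R A) (TB : RTow R B) :
    LiftP R C ∧ Nonempty (RTow R C) := by
  classical
  set u1 : A →ₗ[R] TA.J 0 := TA.ι 0 ∘ₗ TA.e.toLinearMap with hu1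
  have hu1_inj : Function.Injective u1 := fun x y hxy => TA.e.injective (TA.mono 0 hxy)
  set m : A →ₗ[R] (TA.J 0 × B) := LinearMap.prod u1 (-f) with hm
  set N := range m with hN
  set b : B →ₗ[R] ((TA.J 0 × B : Type) ⧸ N) := N.mkQ ∘ₗ LinearMap.inr R (TA.J 0) B with hb
  have hb_inj : Function.Injective b := by
    rw [← LinearMap.ker_eq_bot]
    apply (Submodule.eq_bot_iff _).2
    intro y hy
    have h1 : N.mkQ ((0 : TA.J 0), y) = 0 := hy
    rw [Submodule.mkQ_apply, Submodule.Quotient.mk_eq_zero] at h1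
    obtain ⟨a, ha⟩ := h1
    have ha1 : u1 a = 0 := congrArg Prod.fst ha
    have ha2 : -f a = y := congrArg Prod.snd ha
    have ha0 : a = 0 := hu1_inj (by rw [ha1, map_zero])
    rw [← ha2, ha0, map_zero, neg_zero]
  set c : ((TA.J 0 × B : Type) ⧸ N) →ₗ[R] TA.S 1 := Submodule.liftQ N
    (TA.π 0 ∘ₗ LinearMap.fst R (TA.J 0) B)
    (by
      rintro _ ⟨a, rfl⟩
      show TA.π 0 (u1 a) = 0
      have : u1 a ∈ ker (TA.π 0) := by rw [← TA.ex 0]; exact ⟨TA.e a, rfl⟩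
      exact this) with hc
  have hc_surj : Function.Surjective c := by
    intro s
    obtain ⟨x, hx⟩ := TA.epi 0 s
    exact ⟨N.mkQ (x, 0), hx⟩
  have hbc : range b = ker c := by
    ext z
    constructor
    · rintro ⟨y, rfl⟩
      show TA.π 0 0 = 0
      rw [map_zero]
    · intro hz
      obtain ⟨⟨x, y⟩, rfl⟩ := Submodule.mkQ_surjective _ z
      have hz' : TA.π 0 x = 0 := hz
      have hx : x ∈ range (TA.ι 0) := by rw [TA.ex 0]; exact hz'
      obtain ⟨s, hs⟩ := hx
      set a := TA.e.symm s with ha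
      have hxa : x = u1 a := by
        show x = TA.ι 0 (TA.e (TA.e.symm s))
        rw [TA.e.apply_symm_apply, hs]
      refine ⟨y + f a, ?_⟩
      show N.mkQ ((0 : TA.J 0), y + f a) = N.mkQ (x, y)
      rw [Submodule.mkQ_apply, Submodule.mkQ_apply, Submodule.Quotient.eq]
      refine ⟨-a, ?_⟩
      show (u1 (-a), -f (-a)) = ((0 : TA.J 0), y + f a) - (x, y)
      rw [Prod.mk_sub_mk, map_neg, map_neg, neg_neg, hxa]
      refine Prod.ext_iff.2 ⟨?_, ?_⟩
      · show -(u1 a) = 0 - u1 a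
        abel
      · show f a = y + f a - y
        abel
  have hP_lift : LiftP R ((TA.J 0 × B : Type) ⧸ N) :=
    liftP_ext b c hb_inj hc_surj hbc
      (liftP_of_equiv TB.e.symm (TB.lif 0)) (TA.lif 1)
  set j : TA.J 0 →ₗ[R] ((TA.J 0 × B : Type) ⧸ N) := N.mkQ ∘ₗ LinearMap.inl R (TA.J 0) B with hj
  have hj_inj : Function.Injective j := by
    rw [← LinearMap.ker_eq_bot]
    apply (Submodule.eq_bot_iff _).2
    intro x hx
    have h1 : N.mkQ (x, (0 : B)) = 0 := hx
    rw [Submodule.mkQ_apply, Submodule.Quotient.mk_eq_zero] at h1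
    obtain ⟨a, ha⟩ := h1
    have ha2 : -(f a) = 0 := congrArg Prod.snd ha
    have ha0 : a = 0 := hf (by rw [map_zero, ← neg_eq_zero]; exact ha2)
    have ha1 : u1 a = x := congrArg Prod.fst ha
    rw [← ha1, ha0, map_zero]
  set pbar : ((TA.J 0 × B : Type) ⧸ N) →ₗ[R] C := Submodule.liftQ N
    (g ∘ₗ LinearMap.snd R (TA.J 0) B)
    (by
      rintro _ ⟨a, rfl⟩
      show g (-f a) = 0
      rw [map_neg, neg_eq_zero]
      have : f a ∈ ker g := by rw [← hfg]; exact ⟨a, rfl⟩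
      exact this) with hpbar
  have hpbar_surj : Function.Surjective pbar := by
    intro c0
    obtain ⟨y, hy⟩ := hg c0
    exact ⟨N.mkQ (0, y), hy⟩
  have hjp : range j = ker pbar := by
    ext z
    constructor
    · rintro ⟨x, rfl⟩
      show g 0 = 0
      rw [map_zero]
    · intro hz
      obtain ⟨⟨x, y⟩, rfl⟩ := Submodule.mkQ_surjective _ z
      have hz' : g y = 0 := hz
      have hy : y ∈ range f := by rw [hfg]; exact hz'
      obtain ⟨a, ha⟩ := hy
      refine ⟨x + u1 a, ?_⟩
      show N.mkQ (x + u1 a, (0 : B)) = N.mkQ (x, y)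
      rw [Submodule.mkQ_apply, Submodule.mkQ_apply, Submodule.Quotient.eq]
      refine ⟨a, ?_⟩
      show (u1 a, -f a) = (x + u1 a, (0 : B)) - (x, y)
      rw [Prod.mk_sub_mk, ha]
      refine Prod.ext_iff.2 ⟨?_, ?_⟩
      · show u1 a = x + u1 a - x
        abel
      · show -y = 0 - y
        abel
  have hC : LiftP R C := liftP_split j pbar hj_inj hpbar_surj hjp (TA.injJ 0) hP_lift
  obtain ⟨TP⟩ := rtow_ext TB TA.shift b c hb_inj hc_surj hbc
  have hTC := rtow_of_split j pbar hj_inj hpbar_surj hjp (TA.injJ 0) TP hC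
  exact ⟨hC, hTC⟩

/-- Given `0 → A → B → C → 0` with left towers on `A` and `B` and `LiftP C`,
the quotient `C` has a left tower. -/
lemma ltow_coker (hf : Function.Injective f) (hg : Function.Surjective g)
    (hfg : range f = ker g) (TA : LTow R A) (TB : LTow R B) (hC : LiftP R C) :
    Nonempty (LTow R C) := by
  classical
  set q'' : TB.J 0 →ₗ[R] C := g ∘ₗ TB.e.symm.toLinearMap ∘ₗ TB.π 0 with hq''
  have hq''_surj : Function.Surjective q'' := by
    intro c0
    obtain ⟨y, hy⟩ := hg c0
    obtain ⟨x, hx⟩ := TB.epi 0 (TB.e y)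
    refine ⟨x, ?_⟩
    show g (TB.e.symm (TB.π 0 x)) = c0
    rw [hx, TB.e.symm_apply_apply, hy]
  set W := ker q'' with hW
  have hπι0 : ∀ s : TB.S 1, TB.π 0 (TB.ι 0 s) = 0 := by
    intro s
    have : TB.ι 0 s ∈ ker (TB.π 0) := by rw [← TB.ex 0]; exact ⟨s, rfl⟩
    exact this
  set a : (TB.S 1 : Type) →ₗ[R] W := LinearMap.codRestrict W (TB.ι 0)
    (fun s => by
      show q'' (TB.ι 0 s) = 0
      show g (TB.e.symm (TB.π 0 (TB.ι 0 s))) = 0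
      rw [hπι0, map_zero, map_zero]) with harest
  have ha_inj : Function.Injective a := by
    intro x y hxy
    exact TB.mono 0 (congrArg Subtype.val hxy)
  have memf : ∀ w : W, ((TB.e.symm.toLinearMap ∘ₗ TB.π 0 ∘ₗ W.subtype) w) ∈ range f := by
    intro w
    rw [hfg]
    show g (TB.e.symm (TB.π 0 (w : TB.J 0))) = 0
    exact w.2
  set b : (W : Type) →ₗ[R] A := (LinearEquiv.ofInjective f hf).symm.toLinearMap ∘ₗ
    LinearMap.codRestrict (range f) (TB.e.symm.toLinearMap ∘ₗ TB.π 0 ∘ₗ W.subtype) memf with hbdef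
  have hb_surj : Function.Surjective b := by
    intro a'
    obtain ⟨x, hx⟩ := TB.epi 0 (TB.e (f a'))
    have hw : x ∈ W := by
      show g (TB.e.symm (TB.π 0 x)) = 0
      rw [hx, TB.e.symm_apply_apply]
      have : f a' ∈ ker g := by rw [← hfg]; exact ⟨a', rfl⟩
      exact this
    refine ⟨⟨x, hw⟩, ?_⟩
    show (LinearEquiv.ofInjective f hf).symm
      (LinearMap.codRestrict (range f) (TB.e.symm.toLinearMap ∘ₗ TB.π 0 ∘ₗ W.subtype) memf
        ⟨x, hw⟩) = a'
    rw [LinearEquiv.symm_apply_eq]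
    apply Subtype.ext
    show TB.e.symm (TB.π 0 x) = ((LinearEquiv.ofInjective f hf) a' : B)
    rw [hx, TB.e.symm_apply_apply, LinearEquiv.ofInjective_apply]
  have hab : range a = ker b := by
    ext w
    constructor
    · rintro ⟨s, rfl⟩
      show (LinearEquiv.ofInjective f hf).symm
        (LinearMap.codRestrict (range f) (TB.e.symm.toLinearMap ∘ₗ TB.π 0 ∘ₗ W.subtype) memf
          (a s)) = 0
      have h0 : LinearMap.codRestrict (range f)
          (TB.e.symm.toLinearMap ∘ₗ TB.π 0 ∘ₗ W.subtype) memf (a s) = 0 := by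
        apply Subtype.ext
        show TB.e.symm (TB.π 0 (TB.ι 0 s)) = 0
        rw [hπι0, map_zero]
      rw [h0, map_zero]
    · intro hw
      have h1 : (LinearEquiv.ofInjective f hf).symm
          (LinearMap.codRestrict (range f) (TB.e.symm.toLinearMap ∘ₗ TB.π 0 ∘ₗ W.subtype) memf
            w) = 0 := hw
      have h2 := congrArg (LinearEquiv.ofInjective f hf) h1
      rw [LinearEquiv.apply_symm_apply, map_zero] at h2
      have h3 : TB.e.symm (TB.π 0 (w : TB.J 0)) = 0 := congrArg Subtype.val h2
      have h4 : TB.π 0 (w : TB.J 0) = 0 := by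
        have := congrArg TB.e h3
        rwa [TB.e.apply_symm_apply, map_zero] at this
      have h5 : (w : TB.J 0) ∈ range (TB.ι 0) := by rw [TB.ex 0]; exact h4
      obtain ⟨s, hs⟩ := h5
      exact ⟨s, Subtype.ext hs⟩
  obtain ⟨TW⟩ := ltow_ext TB.shift TA a b ha_inj hb_surj hab
  refine ⟨{
    S := fun n => match n with | 0 => ModuleCat.of R C | n+1 => TW.S n
    J := fun n => match n with | 0 => TB.J 0 | n+1 => TW.J n
    ι := fun n => match n with
      | 0 => W.subtype ∘ₗ TW.e.symm.toLinearMap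
      | n+1 => TW.ι n
    π := fun n => match n with | 0 => q'' | n+1 => TW.π n
    injJ := fun n => match n with | 0 => TB.injJ 0 | n+1 => TW.injJ n
    mono := fun n => match n with
      | 0 => fun x y hxy => TW.e.symm.injective (Subtype.coe_injective hxy)
      | n+1 => TW.mono n
    epi := fun n => match n with | 0 => hq''_surj | n+1 => TW.epi n
    ex := fun n => match n with
      | 0 => by
        ext x
        constructor
        · rintro ⟨z, rfl⟩
          exact (TW.e.symm z).2
        · intro hx
          refine ⟨TW.e ⟨x, hx⟩, ?_⟩
          show ((TW.e.symm (TW.e ⟨x, hx⟩) : W) : TB.J 0) = x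
          rw [TW.e.symm_apply_apply]
      | n+1 => TW.ex n
    lif := fun n => match n with | 0 => hC | n+1 => TW.lif n
    e := LinearEquiv.refl R C }⟩

end MainLemmas

/-- Over a noetherian Gorenstein ring, the class of Gorenstein injective modules is closed
under cokernels of monomorphisms: in a short exact sequence `0 → G' → G → G'' → 0` with
`G'` and `G` Gorenstein injective, `G''` is Gorenstein injective. -/
theorem isGorensteinInjective_of_shortExact
    (R : Type) [CommRing R] [IsNoetherianRing R] (hR : IsGorensteinRing R)
    (G' G G'' : Type) [AddCommGroup G'] [Module R G'] [AddCommGroup G] [Module R G]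
    [AddCommGroup G''] [Module R G'']
    (f : G' →ₗ[R] G) (g : G →ₗ[R] G'')
    (hf : Function.Injective f) (hg : Function.Surjective g)
    (hfg : LinearMap.range f = LinearMap.ker g)
    (h1 : IsGorensteinInjective R G') (h2 : IsGorensteinInjective R G) :
    IsGorensteinInjective R G'' := by
  obtain ⟨E1, d1, hinj1, hex1, hlift1, ⟨e1⟩⟩ := h1
  obtain ⟨E2, d2, hinj2, hex2, hlift2, ⟨e2⟩⟩ := h2
  obtain ⟨TAR⟩ := rtow_of_gi E1 d1 hinj1 hex1 hlift1 e1
  obtain ⟨TBR⟩ := rtow_of_gi E2 d2 hinj2 hex2 hlift2 e2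
  obtain ⟨TAL⟩ := ltow_of_gi E1 d1 hinj1 hex1 hlift1 e1
  obtain ⟨TBL⟩ := ltow_of_gi E2 d2 hinj2 hex2 hlift2 e2
  obtain ⟨hC, ⟨TRC⟩⟩ := coker_towers f g hf hg hfg TAR TBR
  obtain ⟨TLC⟩ := ltow_coker f g hf hg hfg TAL TBL hC
  exact glue TLC TRC
end

section
/- Let R be a commutative noetherian ring of Krull dimension n and let G be a Gorenstein injective R-module with complete injective resolution E. Then for any specialization closed V ⊆ Spec R, the complex Γ_V(E), obtained by applying the V-torsion functor termwise, is an acyclic complex of injective R-modules. -/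
open CategoryTheory PrimeSpectrum

section AuxAll

variable {R : Type} [CommRing R]

theorem zl_of_pow_le {a I : Ideal R} {t : ℕ} (h : a ^ t ≤ I) :
    zeroLocus (I : Set R) ⊆ zeroLocus (a : Set R) := by
  intro p hp
  rw [mem_zeroLocus] at hp ⊢
  rcases Nat.eq_zero_or_pos t with rfl | ht
  · rw [pow_zero, Ideal.one_eq_top, top_le_iff] at h
    exact absurd ((Ideal.eq_top_iff_one _).2 (hp (h.symm ▸ Submodule.mem_top)))
      p.isPrime.ne_top
  · have h2 : a ^ t ≤ p.asIdeal := le_trans h (fun r hr => hp hr)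
    exact_mod_cast (Ideal.IsPrime.pow_le_iff ht.ne').mp h2

variable (R) in
def torsV (V : Set (PrimeSpectrum R)) (M : Type) [AddCommGroup M] [Module R M] :
    Submodule R M where
  carrier := {m | zeroLocus ((Ideal.torsionOf R M m : Ideal R) : Set R) ⊆ V}
  zero_mem' := by
    intro p hp
    rw [Ideal.torsionOf_zero] at hp
    exact absurd ((Ideal.eq_top_iff_one _).2 (hp Submodule.mem_top)) p.isPrime.ne_top
  add_mem' := by
    intro x y hx hy
    have hle : Ideal.torsionOf R M x ⊓ Ideal.torsionOf R M y ≤ Ideal.torsionOf R M (x + y) := by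
      intro r hr
      rw [Submodule.mem_inf] at hr
      obtain ⟨hrx, hry⟩ := hr
      rw [Ideal.mem_torsionOf_iff] at hrx hry ⊢
      rw [smul_add, hrx, hry, add_zero]
    intro p hp
    have : p ∈ zeroLocus ((Ideal.torsionOf R M x ⊓ Ideal.torsionOf R M y : Ideal R) : Set R) := by
      rw [mem_zeroLocus] at hp ⊢
      exact le_trans (by exact_mod_cast hle) (by exact_mod_cast hp)
    rw [zeroLocus_inf] at this
    rcases this with h | h
    · exact hx h
    · exact hy h
  smul_mem' := by
    intro c x hx
    have hle : Ideal.torsionOf R M x ≤ Ideal.torsionOf R M (c • x) := by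
      intro r hr
      rw [Ideal.mem_torsionOf_iff] at hr ⊢
      rw [smul_comm, hr, smul_zero]
    intro p hp
    apply hx
    rw [mem_zeroLocus] at hp ⊢
    exact le_trans (by exact_mod_cast hle) (by exact_mod_cast hp)

theorem mem_torsV {V : Set (PrimeSpectrum R)} {M : Type} [AddCommGroup M] [Module R M] {m : M} :
    m ∈ torsV R V M ↔ zeroLocus ((Ideal.torsionOf R M m : Ideal R) : Set R) ⊆ V :=
  Iff.rfl

theorem torsV_injective [IsNoetherianRing R] (V : Set (PrimeSpectrum R)) (P : Type)
    [AddCommGroup P] [Module R P] (hP : Module.Injective R P) :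
    Module.Injective R ↥(torsV R V P) := by
  apply Module.Baer.injective
  intro b φ
  obtain ⟨S, hS⟩ := (IsNoetherian.noetherian b : b.FG)
  have hmemS : ∀ v ∈ S, v ∈ b := fun v hv => hS ▸ Ideal.subset_span hv
  set a : Ideal R := S.attach.inf
    (fun v => Ideal.torsionOf R P ((φ ⟨v.1, hmemS v.1 v.2⟩ : ↥(torsV R V P)) : P)) with ha
  have hza : zeroLocus (a : Set R) ⊆ V := by
    intro p hp
    have hle : a ≤ p.asIdeal := fun r hr => hp hr
    obtain ⟨v, hv, hvle⟩ := (Ideal.IsPrime.inf_le' p.isPrime).mp hle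
    exact (φ ⟨v.1, hmemS v.1 v.2⟩).2 ((mem_zeroLocus _ _).mpr (fun r hr => hvle hr))
  have hgen : ∀ (r : R), r ∈ a → ∀ (x : R) (hx : x ∈ b),
      r • ((φ ⟨x, hx⟩ : ↥(torsV R V P)) : P) = 0 := by
    intro r hr x hx
    have hx' : x ∈ Submodule.span R (S : Set R) := by rw [hS]; exact hx
    revert hx
    refine Submodule.span_induction ?_ ?_ ?_ ?_ hx'
    · intro v hv hb
      have hle : a ≤ Ideal.torsionOf R P ((φ ⟨v, hmemS v hv⟩ : ↥(torsV R V P)) : P) :=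
        Finset.inf_le (S.mem_attach ⟨v, hv⟩)
      exact (Ideal.mem_torsionOf_iff _ _).1 (hle hr)
    · intro hb
      rw [show (⟨(0 : R), hb⟩ : ↥b) = 0 from rfl, map_zero, Submodule.coe_zero, smul_zero]
    · intro u v hu' hv' ihu ihv hb
      have hub : u ∈ b := by rw [← hS]; exact hu'
      have hvb : v ∈ b := by rw [← hS]; exact hv'
      rw [show (⟨u + v, hb⟩ : ↥b) = ⟨u, hub⟩ + ⟨v, hvb⟩ from rfl, map_add,
        Submodule.coe_add, smul_add, ihu hub, ihv hvb, add_zero]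
    · intro c u hu' ih hb
      have hub : u ∈ b := by rw [← hS]; exact hu'
      rw [show (⟨c • u, hb⟩ : ↥b) = c • ⟨u, hub⟩ from rfl, map_smul,
        Submodule.coe_smul, smul_comm, ih hub, smul_zero]
  obtain ⟨k, hk⟩ := Ideal.exists_pow_inf_eq_pow_smul a (b : Submodule R R)
  have hAR : a ^ (k + 1) • (⊤ : Submodule R R) ⊓ (b : Submodule R R)
      = a • (a ^ k • ⊤ ⊓ (b : Submodule R R)) := by
    have h := hk (k + 1) (Nat.le_succ k)
    have h1 : k + 1 - k = 1 := by omega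
    rwa [h1, pow_one] at h
  have hvanish : ∀ (x : R), x ∈ a ^ (k + 1) → ∀ hxb : x ∈ b, (φ ⟨x, hxb⟩ : ↥(torsV R V P)) = 0 := by
    intro x hxa hxb
    have hx1 : x ∈ a ^ (k + 1) • (⊤ : Submodule R R) := by
      have he : a ^ (k + 1) • (⊤ : Submodule R R) = a ^ (k + 1) * ⊤ := rfl
      rw [he, Ideal.mul_top]
      exact hxa
    have hx2 : x ∈ a • (a ^ k • ⊤ ⊓ (b : Submodule R R)) := by
      rw [← hAR]; exact Submodule.mem_inf.mpr ⟨hx1, hxb⟩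
    have key : ∃ h : x ∈ b, (φ ⟨x, h⟩ : ↥(torsV R V P)) = 0 := by
      refine Submodule.smul_induction_on hx2 ?_ ?_
      · intro r hr n hn
        have hnb : n ∈ b := hn.2
        refine ⟨Submodule.smul_mem _ _ hnb, ?_⟩
        rw [show (⟨r • n, Submodule.smul_mem _ _ hnb⟩ : ↥b) = r • ⟨n, hnb⟩ from rfl, map_smul]
        exact Subtype.ext (hgen r hr n hnb)
      · rintro u v ⟨hub, ihu⟩ ⟨hvb, ihv⟩
        refine ⟨Submodule.add_mem _ hub hvb, ?_⟩
        rw [show (⟨u + v, Submodule.add_mem _ hub hvb⟩ : ↥b) = ⟨u, hub⟩ + ⟨v, hvb⟩ from rfl,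
          map_add, ihu, ihv, add_zero]
    obtain ⟨h, hphi⟩ := key
    exact hphi
  -- build the extension
  let π : (↥(a ^ (k + 1)) × ↥b) →ₗ[R] R :=
    (a ^ (k + 1)).subtype ∘ₗ LinearMap.fst R _ _ + (b : Submodule R R).subtype ∘ₗ LinearMap.snd R _ _
  let σ : (↥(a ^ (k + 1)) × ↥b) →ₗ[R] P := (torsV R V P).subtype ∘ₗ φ ∘ₗ LinearMap.snd R _ _
  have hker : LinearMap.ker π ≤ LinearMap.ker σ := by
    rintro ⟨y, x⟩ hv
    rw [LinearMap.mem_ker] at hv ⊢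
    have hv' : (y : R) + (x : R) = 0 := hv
    have hx1 : (x : R) ∈ a ^ (k + 1) := by
      have hxy : (x : R) = -(y : R) := by
        rw [eq_neg_iff_add_eq_zero, add_comm]; exact hv'
      rw [hxy]; exact neg_mem y.2
    have h0 : (φ x : ↥(torsV R V P)) = 0 := by
      have := hvanish x.1 hx1 x.2
      simpa using this
    show ((torsV R V P).subtype) (φ x) = 0
    rw [h0, map_zero]
  let χ : ↥(LinearMap.range π) →ₗ[R] P :=
    ((LinearMap.ker π).liftQ σ hker) ∘ₗ (LinearMap.quotKerEquivRange π).symm.toLinearMap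
  have hχ : ∀ v, χ ⟨π v, LinearMap.mem_range_self π v⟩ = σ v := by
    intro v
    show ((LinearMap.ker π).liftQ σ hker) ((LinearMap.quotKerEquivRange π).symm ⟨π v, _⟩) = σ v
    rw [LinearMap.quotKerEquivRange_symm_apply_image]
    rfl
  obtain ⟨g, hg⟩ := hP.out (LinearMap.range π).subtype (Submodule.injective_subtype _) χ
  have hp1b : ∀ (x : R) (hx : x ∈ b), x • g 1 = ((φ ⟨x, hx⟩ : ↥(torsV R V P)) : P) := by
    intro x hx
    have h1 : x • g 1 = g x := by rw [← map_smul, smul_eq_mul, mul_one]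
    have h2 : π (0, ⟨x, hx⟩) = x := by
      show (0 : ↥(a ^ (k+1))).1 + x = x
      rw [Submodule.coe_zero, zero_add]
    have hmem : x ∈ LinearMap.range π := ⟨(0, ⟨x, hx⟩), h2⟩
    have h3 : g x = χ ⟨x, hmem⟩ := hg ⟨x, hmem⟩
    have h4 : (⟨x, hmem⟩ : ↥(LinearMap.range π))
        = ⟨π (0, ⟨x, hx⟩), LinearMap.mem_range_self π _⟩ := Subtype.ext h2.symm
    rw [h1, h3, h4, hχ]
    rfl
  have hp1a : ∀ (y : R), y ∈ a ^ (k + 1) → y • g 1 = 0 := by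
    intro y hy
    have h1 : y • g 1 = g y := by rw [← map_smul, smul_eq_mul, mul_one]
    have h2 : π (⟨y, hy⟩, 0) = y := by
      show y + ((0 : ↥b) : R) = y
      rw [Submodule.coe_zero, add_zero]
    have hmem : y ∈ LinearMap.range π := ⟨(⟨y, hy⟩, 0), h2⟩
    have h3 : g y = χ ⟨y, hmem⟩ := hg ⟨y, hmem⟩
    have h4 : (⟨y, hmem⟩ : ↥(LinearMap.range π))
        = ⟨π (⟨y, hy⟩, 0), LinearMap.mem_range_self π _⟩ := Subtype.ext h2.symm
    rw [h1, h3, h4, hχ]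
    show ((torsV R V P).subtype) (φ 0) = 0
    rw [map_zero, map_zero]
  have hp1V : g 1 ∈ torsV R V P := by
    have hpow : a ^ (k + 1) ≤ Ideal.torsionOf R P (g 1) := by
      intro y hy
      rw [Ideal.mem_torsionOf_iff]
      exact hp1a y hy
    exact fun p hp => hza (zl_of_pow_le hpow hp)
  refine ⟨LinearMap.toSpanSingleton R ↥(torsV R V P) ⟨g 1, hp1V⟩, ?_⟩
  intro x hx
  refine Subtype.ext ?_
  show x • g 1 = ((φ ⟨x, hx⟩ : ↥(torsV R V P)) : P)
  exact hp1b x hx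

variable (R) in
/-- The `a`-torsion submodule. -/
def torsI (a : Ideal R) (M : Type) [AddCommGroup M] [Module R M] : Submodule R M where
  carrier := {m | ∃ t : ℕ, a ^ t ≤ Ideal.torsionOf R M m}
  zero_mem' := ⟨0, by rw [Ideal.torsionOf_zero]; exact le_top⟩
  add_mem' := by
    rintro x y ⟨s, hs⟩ ⟨t, ht⟩
    refine ⟨max s t, fun r hr => ?_⟩
    have hrx := hs (Ideal.pow_le_pow_right (le_max_left s t) hr)
    have hry := ht (Ideal.pow_le_pow_right (le_max_right s t) hr)
    rw [Ideal.mem_torsionOf_iff] at hrx hry ⊢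
    rw [smul_add, hrx, hry, add_zero]
  smul_mem' := by
    rintro c x ⟨t, ht⟩
    refine ⟨t, fun r hr => ?_⟩
    have := ht hr
    rw [Ideal.mem_torsionOf_iff] at this ⊢
    rw [smul_comm, this, smul_zero]

theorem mem_torsI {a : Ideal R} {M : Type} [AddCommGroup M] [Module R M] {m : M} :
    m ∈ torsI R a M ↔ ∃ t : ℕ, a ^ t ≤ Ideal.torsionOf R M m :=
  Iff.rfl

theorem torsI_eq_torsV [IsNoetherianRing R] (a : Ideal R) (M : Type) [AddCommGroup M]
    [Module R M] : torsI R a M = torsV R (zeroLocus (a : Set R)) M := by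
  ext m
  rw [mem_torsI, mem_torsV]
  constructor
  · rintro ⟨t, ht⟩
    exact zl_of_pow_le ht
  · intro h
    have hrad : a ≤ (Ideal.torsionOf R M m).radical := by
      rwa [← zeroLocus_subset_zeroLocus_iff]
    exact Ideal.exists_pow_le_of_le_radical_of_fg hrad (IsNoetherian.noetherian a)

/-- linear maps preserve `a`-torsion -/
theorem map_mem_torsI {a : Ideal R} {M N : Type} [AddCommGroup M] [Module R M] [AddCommGroup N]
    [Module R N] (g : M →ₗ[R] N) {m : M} (hm : m ∈ torsI R a M) : g m ∈ torsI R a N := by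
  obtain ⟨t, ht⟩ := hm
  refine ⟨t, fun r hr => ?_⟩
  have := ht hr
  rw [Ideal.mem_torsionOf_iff] at this ⊢
  rw [← map_smul, this, map_zero]

theorem mem_torsI_sup_span [IsNoetherianRing R] {a : Ideal R} {f : R} {M : Type} [AddCommGroup M]
    [Module R M] {m : M} :
    m ∈ torsI R (Ideal.span {f} ⊔ a) M ↔ m ∈ torsI R a M ∧ ∃ t : ℕ, f ^ t • m = 0 := by
  constructor
  · rintro ⟨t, ht⟩
    refine ⟨⟨t, le_trans (Ideal.pow_right_mono le_sup_right t) ht⟩, t, ?_⟩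
    rw [← Ideal.mem_torsionOf_iff]
    exact ht (Ideal.pow_mem_pow (le_sup_left (a := Ideal.span {f}) (Ideal.subset_span rfl)) t)
  · rintro ⟨⟨t₁, h₁⟩, t₂, h₂⟩
    have hrad : Ideal.span {f} ⊔ a ≤ (Ideal.torsionOf R M m).radical := by
      refine sup_le ?_ ?_
      · rw [Ideal.span_le, Set.singleton_subset_iff]
        exact ⟨t₂, by rwa [Ideal.mem_torsionOf_iff]⟩
      · intro x hx
        exact ⟨t₁, h₁ (Ideal.pow_mem_pow hx t₁)⟩
    exact Ideal.exists_pow_le_of_le_radical_of_fg hrad (IsNoetherian.noetherian _)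


/-- In a noetherian ring, an injective module is "divisible by powers of `f` up to
`f`-torsion". -/
theorem exists_div_up_to_torsion [IsNoetherianRing R] {Q : Type} [AddCommGroup Q] [Module R Q]
    (hQ : Module.Injective R Q) (f : R) (q : Q) (t : ℕ) :
    ∃ (s : ℕ) (w : Q), f ^ (s + t) • w = f ^ s • q := by
  obtain ⟨s, hs⟩ : ∃ s : ℕ, ∀ m, s ≤ m →
      Ideal.torsionOf R R (f ^ s) = Ideal.torsionOf R R (f ^ m) := by
    refine monotone_stabilizes_iff_noetherian.mpr inferInstance
      (⟨fun n => Ideal.torsionOf R R (f ^ n), ?_⟩ : ℕ →o Submodule R R)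
    intro n m hnm
    intro r hr
    rw [Ideal.mem_torsionOf_iff] at hr ⊢
    obtain ⟨c, rfl⟩ := Nat.exists_eq_add_of_le hnm
    rw [smul_eq_mul] at hr
    rw [pow_add, smul_eq_mul, ← mul_assoc, hr, zero_mul]
  have W : ∀ r r' : R, r * f ^ (s + t) = r' * f ^ (s + t) →
      r • (f ^ s • q) = r' • (f ^ s • q) := by
    intro r r' h
    have h1 : (r - r') • f ^ (s + t) = 0 := by
      rw [smul_eq_mul, sub_mul, h, sub_self]
    have h2 : r - r' ∈ Ideal.torsionOf R R (f ^ (s + t)) :=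
      (Ideal.mem_torsionOf_iff _ _).2 h1
    rw [← hs (s + t) (Nat.le_add_right s t)] at h2
    have h3 : (r - r') • (f ^ s • q) = 0 := by
      have h5 : (r - r') • f ^ s = 0 := (Ideal.mem_torsionOf_iff _ _).1 h2
      rw [smul_smul, ← smul_eq_mul, h5, zero_smul]
    rw [sub_smul, sub_eq_zero] at h3
    exact h3
  have rep : ∀ x : Ideal.span {f ^ (s + t)}, ∃ c : R, c * f ^ (s + t) = (x : R) :=
    fun x => Ideal.mem_span_singleton'.mp x.2
  choose c hc using rep
  let φ : (Ideal.span {f ^ (s + t)} : Ideal R) →ₗ[R] Q :=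
    { toFun := fun x => c x • (f ^ s • q)
      map_add' := by
        intro x y
        refine (W _ _ ?_).trans (add_smul _ _ _)
        rw [add_mul, hc, hc, hc, Submodule.coe_add]
      map_smul' := by
        intro r x
        refine (W _ _ ?_).trans (mul_smul _ _ _)
        rw [mul_assoc, hc, hc, RingHom.id_apply, Submodule.coe_smul, smul_eq_mul] }
  obtain ⟨g, hg⟩ := hQ.out (Ideal.span {f ^ (s + t)}).subtype
    (Submodule.injective_subtype _) φ
  refine ⟨s, g 1, ?_⟩
  have hmem : f ^ (s + t) ∈ Ideal.span {f ^ (s + t)} := Ideal.mem_span_singleton_self _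
  have : f ^ (s + t) • g 1 = g (f ^ (s + t) • 1) := (map_smul g _ _).symm
  rw [this, smul_eq_mul, mul_one]
  have h4 : g (f ^ (s + t)) = φ ⟨f ^ (s + t), hmem⟩ := hg ⟨f ^ (s + t), hmem⟩
  rw [h4]
  show c _ • (f ^ s • q) = f ^ s • q
  have := W (c ⟨f ^ (s + t), hmem⟩) 1 (by rw [hc, one_mul])
  rw [this, one_smul]


theorem tors_exact {R : Type} [CommRing R] [IsNoetherianRing R]
    (E : ℤ → ModuleCat.{0} R) (d : ∀ i : ℤ, E i ⟶ E (i + 1))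
    (hinj : ∀ i, Module.Injective R (E i))
    (hexact : ∀ i, LinearMap.range (d i).hom = LinearMap.ker (d (i + 1)).hom)
    (S : Finset R) :
    ∀ (i : ℤ) (x : ↥(E (i + 1))), x ∈ torsI R (Ideal.span (S : Set R)) ↥(E (i + 1)) →
      d (i + 1) x = 0 →
      ∃ y, y ∈ torsI R (Ideal.span (S : Set R)) ↥(E i) ∧ d i y = x := by
  classical
  induction S using Finset.induction_on with
  | empty =>
    intro i x _ hdx
    have hx : x ∈ LinearMap.ker (d (i + 1)).hom := LinearMap.mem_ker.mpr hdx
    rw [← hexact i] at hx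
    obtain ⟨y, hy⟩ := hx
    refine ⟨y, ⟨1, ?_⟩, hy⟩
    rw [Finset.coe_empty, Ideal.span_empty, pow_one]
    exact bot_le
  | @insert f S hf ih =>
    intro i x hx hdx
    obtain ⟨j, rfl⟩ : ∃ j, i = j + 1 := ⟨i - 1, (Int.sub_add_cancel i 1).symm⟩
    have hsp : Ideal.span ((insert f S : Finset R) : Set R)
        = Ideal.span {f} ⊔ Ideal.span (S : Set R) := by
      rw [Finset.coe_insert, Ideal.span_insert]
    rw [hsp, mem_torsI_sup_span] at hx
    obtain ⟨hxa, t, hft⟩ := hx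
    obtain ⟨z, hza, hdz⟩ := ih (j + 1) x hxa hdx
    have hdu : d (j + 1) (f ^ t • z) = 0 := by
      rw [map_smul, hdz, hft]
    have hu_tors : f ^ t • z ∈ torsI R (Ideal.span (S : Set R)) ↥(E (j + 1)) :=
      Submodule.smul_mem _ _ hza
    obtain ⟨ξ, hξa, hdξ⟩ := ih j (f ^ t • z) hu_tors hdu
    have hQinj : Module.Injective R ↥(torsI R (Ideal.span (S : Set R)) ↥(E j)) := by
      rw [torsI_eq_torsV]
      exact torsV_injective _ _ (hinj j)
    obtain ⟨s, w', hw'⟩ := exists_div_up_to_torsion hQinj f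
      (⟨ξ, hξa⟩ : ↥(torsI R (Ideal.span (S : Set R)) ↥(E j))) t
    refine ⟨z - d j (w' : ↥(E j)), ?_, ?_⟩
    · rw [hsp, mem_torsI_sup_span]
      constructor
      · exact Submodule.sub_mem _ hza (map_mem_torsI (d j).hom w'.2)
      · refine ⟨s + t, ?_⟩
        have hval2 : f ^ (s + t) • (w' : ↥(E j)) = f ^ s • ξ := congrArg Subtype.val hw'
        rw [smul_sub, ← map_smul, hval2, map_smul, hdξ, smul_smul, ← pow_add, sub_self]
    · rw [map_sub, hdz]
      have hzero : d (j + 1) (d j (w' : ↥(E j))) = 0 := by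
        have hmem : d j (w' : ↥(E j)) ∈ LinearMap.range (d j).hom := ⟨_, rfl⟩
        rw [hexact j] at hmem
        exact LinearMap.mem_ker.mp hmem
      rw [hzero, sub_zero]


end AuxAll

open CategoryTheory

/-- Over a commutative noetherian ring of finite Krull dimension `n`, applying the
`V`-torsion functor termwise to a complete injective resolution `E` of a Gorenstein
injective module `G` yields an acyclic complex of injective modules. -/
theorem torsion_of_complete_injective_resolution_acyclic
    (R : Type) [CommRing R] [IsNoetherianRing R]
    (n : ℕ) (hdim : ringKrullDim R = (n : WithBot (WithTop ℕ)))
    (V : Set (PrimeSpectrum R))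
    (hV : ∀ p ∈ V, ∀ q : PrimeSpectrum R, p.asIdeal ≤ q.asIdeal → q ∈ V)
    (G : Type) [AddCommGroup G] [Module R G]
    -- a complete injective resolution `E` of `G`
    (E : ℤ → ModuleCat.{0} R) (d : ∀ i : ℤ, E i ⟶ E (i + 1))
    (hinj : ∀ i, Module.Injective R (E i))
    (hexact : ∀ i, LinearMap.range (d i).hom = LinearMap.ker (d (i + 1)).hom)
    (htot : ∀ (I : ModuleCat.{0} R), Module.Injective R I →
      ∀ (i : ℤ) (f : I ⟶ E (i + 1)), f ≫ d (i + 1) = 0 →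
        ∃ g : I ⟶ E i, g ≫ d i = f)
    (hsyz : Nonempty (G ≃ₗ[R] LinearMap.ker (d 0).hom))
    -- the termwise `V`-torsion subcomplex `Γ_V(E)`
    (N : ∀ i : ℤ, Submodule R (E i))
    (hN : ∀ i, ∀ e : E i, e ∈ N i ↔ Module.support R ↥(Submodule.span R {e}) ⊆ V)
    (δ : ∀ i : ℤ, ↥(N i) →ₗ[R] ↥(N (i + 1)))
    (hδ : ∀ i, ∀ x : ↥(N i), ((δ i x : E (i + 1))) = d i (x : E i)) :
    -- `Γ_V(E)` is a complex of injectives and is acyclic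
    (∀ i, Module.Injective R ↥(N i)) ∧
    (∀ i : ℤ, LinearMap.range (δ i) = LinearMap.ker (δ (i + 1))) := by
  have hann : ∀ (i : ℤ) (e : ↥(E i)),
      Module.annihilator R ↥(Submodule.span R {e}) = Ideal.torsionOf R ↥(E i) e := by
    intro i e
    ext r
    rw [Module.mem_annihilator, Ideal.mem_torsionOf_iff]
    constructor
    · intro h
      exact congrArg Subtype.val (h ⟨e, Submodule.mem_span_singleton_self e⟩)
    · intro h m
      obtain ⟨c, hc⟩ := Submodule.mem_span_singleton.mp m.2
      refine Subtype.ext ?_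
      show r • (m : ↥(E i)) = 0
      rw [← hc, smul_comm, h, smul_zero]
  have hNt : ∀ i, N i = torsV R V ↥(E i) := by
    intro i
    ext e
    rw [hN i e]
    have hs : Module.support R ↥(Submodule.span R {e})
        = PrimeSpectrum.zeroLocus ((Ideal.torsionOf R ↥(E i) e : Ideal R) : Set R) := by
      rw [Module.support_eq_zeroLocus, hann i e]
    rw [hs]
    exact Iff.rfl
  constructor
  · intro i
    rw [hNt i]
    exact torsV_injective V ↥(E i) (hinj i)
  · intro i
    ext x
    simp only [LinearMap.mem_range, LinearMap.mem_ker]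
    constructor
    · rintro ⟨ξ, rfl⟩
      refine Subtype.ext ?_
      rw [hδ (i + 1)]
      have h1 : ((δ i ξ : ↥(N (i + 1))) : ↥(E (i + 1))) = d i (ξ : ↥(E i)) := hδ i ξ
      rw [h1]
      have hmem : d i (ξ : ↥(E i)) ∈ LinearMap.ker (d (i + 1)).hom := by
        rw [← hexact i]
        exact ⟨_, rfl⟩
      exact LinearMap.mem_ker.mp hmem
    · intro hx
      have hdx : d (i + 1) (x : ↥(E (i + 1))) = 0 := by
        rw [← hδ (i + 1) x, hx]
        rfl
      have hxV : PrimeSpectrum.zeroLocus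
          ((Ideal.torsionOf R ↥(E (i + 1)) (x : ↥(E (i + 1))) : Ideal R) : Set R) ⊆ V :=
        (le_of_eq (hNt (i + 1))) x.2
      obtain ⟨S, hSa⟩ := (IsNoetherian.noetherian
        (Ideal.torsionOf R ↥(E (i + 1)) (x : ↥(E (i + 1)))) :
        (Ideal.torsionOf R ↥(E (i + 1)) (x : ↥(E (i + 1)))).FG)
      have hxtors : (x : ↥(E (i + 1))) ∈ torsI R (Ideal.span (S : Set R)) ↥(E (i + 1)) := by
        refine ⟨1, ?_⟩
        rw [pow_one]
        exact le_of_eq hSa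
      obtain ⟨y, hy_tors, hdy⟩ := tors_exact E d hinj hexact S i (x : ↥(E (i + 1))) hxtors hdx
      have hyN : y ∈ N i := by
        obtain ⟨t, ht⟩ := hy_tors
        have ht' : (Ideal.torsionOf R ↥(E (i + 1)) (x : ↥(E (i + 1)))) ^ t
            ≤ Ideal.torsionOf R ↥(E i) y := by
          rw [← hSa]
          exact ht
        have hmem : y ∈ torsV R V ↥(E i) := fun p hp => hxV (zl_of_pow_le ht' hp)
        exact (le_of_eq (hNt i).symm) hmem
      refine ⟨⟨y, hyN⟩, Subtype.ext ?_⟩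
      rw [hδ i]
      exact hdy
end
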